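/- arXiv:2004.12106 — 13 statements merged into one kernel-verified Lean document; each statement's English description precedes it below -/
import Mathlib

section
/- Let n = 2m be even and let v_1,…,v_n ∈ ℝ³ be the edge vectors of a generic closed n-gon (so v_1+⋯+v_n = 0 and Δ_i ≠ 0 for all i). Then the polygon is regular (i.e. a support system exists) if and only if Δ_1·Δ_3·…·Δ_{2m−1} = Δ_2·Δ_4·…·Δ_{2m}. -/
open Matrix


/- ### Vector algebra helpers -/

private lemma triple_cyc' (a b c : Fin 3 → ℝ) : a ⬝ᵥ (b ⨯₃ c) = (a ⨯₃ b) ⬝ᵥ c := by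
  simp [cross_apply, dotProduct, Fin.sum_univ_three]; ring

private lemma cross_cross_mid' (a b c : Fin 3 → ℝ) :
    (a ⨯₃ b) ⨯₃ (b ⨯₃ c) = (a ⬝ᵥ (b ⨯₃ c)) • b := by
  funext i
  fin_cases i <;>
    simp [cross_apply, dotProduct, Fin.sum_univ_three, Pi.smul_apply, smul_eq_mul] <;> ring

private lemma smul_cross_smul' (s t : ℝ) (a b : Fin 3 → ℝ) :
    (s • a) ⨯₃ (t • b) = (s * t) • (a ⨯₃ b) := by
  funext i
  fin_cases i <;>
    simp [cross_apply, Pi.smul_apply, smul_eq_mul] <;> ring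

private lemma parallel_of_cross_eq_zero' (x y : Fin 3 → ℝ) (hy : y ≠ 0) (h : x ⨯₃ y = 0) :
    ∃ t : ℝ, x = t • y := by
  have h0 := congrFun h 0
  have h1 := congrFun h 1
  have h2 := congrFun h 2
  simp [cross_apply] at h0 h1 h2
  have hy' : y 0 ≠ 0 ∨ y 1 ≠ 0 ∨ y 2 ≠ 0 := by
    by_contra hc
    push_neg at hc
    apply hy
    funext i; fin_cases i <;> simp [hc.1, hc.2.1, hc.2.2]
  rcases hy' with hj | hj | hj
  · refine ⟨x 0 / y 0, funext fun i => ?_⟩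
    fin_cases i <;> simp [Pi.smul_apply, smul_eq_mul] <;> field_simp <;> linarith [h1, h2, h0]
  · refine ⟨x 1 / y 1, funext fun i => ?_⟩
    fin_cases i <;> simp [Pi.smul_apply, smul_eq_mul] <;> field_simp <;> linarith [h1, h2, h0]
  · refine ⟨x 2 / y 2, funext fun i => ?_⟩
    fin_cases i <;> simp [Pi.smul_apply, smul_eq_mul] <;> field_simp <;> linarith [h1, h2, h0]

private lemma exists_smul_of_perp' (x a b : Fin 3 → ℝ) (hab : a ⨯₃ b ≠ 0)
    (h1 : x ⬝ᵥ a = 0) (h2 : x ⬝ᵥ b = 0) : ∃ t : ℝ, x = t • (a ⨯₃ b) := by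
  apply parallel_of_cross_eq_zero' _ _ hab
  have key : x ⨯₃ (a ⨯₃ b) = (x ⬝ᵥ b) • a - (x ⬝ᵥ a) • b := by
    funext i
    fin_cases i <;>
      simp [cross_apply, dotProduct, Fin.sum_univ_three, Pi.smul_apply, Pi.sub_apply,
        smul_eq_mul] <;> ring
  rw [key, h1, h2]
  simp

private lemma smul_self_eq_self (t : ℝ) (x : Fin 3 → ℝ) (hx : x ≠ 0) (h : t • x = x) :
    t = 1 := by
  have : (t - 1) • x = 0 := by rw [sub_smul, one_smul, h, sub_self]
  rcases smul_eq_zero.mp this with h' | h'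
  · linarith [sub_eq_zero.mp (by linarith [h'] : t - 1 = 0)]
  · exact absurd h' hx

/- ### The scalar recursion -/

private noncomputable def dseq' (D : ℕ → ℝ) : ℕ → ℝ
  | 0 => 1
  | k+1 => (dseq' D k * D k)⁻¹

private lemma dseq'_ne_zero (D : ℕ → ℝ) (hD : ∀ k, D k ≠ 0) : ∀ k, dseq' D k ≠ 0 := by
  intro k
  induction k with
  | zero => simp [dseq']
  | succ k ih => simp only [dseq', ne_eq, inv_eq_zero, mul_eq_zero, not_or]; exact ⟨ih, hD k⟩

private lemma dseq'_rec (D : ℕ → ℝ) (hD : ∀ k, D k ≠ 0) (k : ℕ) :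
    dseq' D k * dseq' D (k+1) * D k = 1 := by
  have h1 := dseq'_ne_zero D hD k
  have h2 := hD k
  rw [show dseq' D (k+1) = (dseq' D k * D k)⁻¹ from rfl]
  field_simp

private lemma dseq'_closed (D : ℕ → ℝ) (hD : ∀ k, D k ≠ 0) (k : ℕ) :
    dseq' D (2*k) * ∏ j ∈ Finset.range k, D (2*j+1) = ∏ j ∈ Finset.range k, D (2*j) := by
  induction k with
  | zero => simp [dseq']
  | succ k ih =>
    have e1 : 2 * (k+1) = (2*k+1) + 1 := by ring
    have e2 : dseq' D (2*(k+1)) = (dseq' D (2*k+1) * D (2*k+1))⁻¹ := by rw [e1]; rfl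
    have e3 : dseq' D (2*k+1) = (dseq' D (2*k) * D (2*k))⁻¹ := rfl
    rw [Finset.prod_range_succ, Finset.prod_range_succ, e2, e3, ← ih]
    have h1 := dseq'_ne_zero D hD (2*k)
    have h2 := hD (2*k)
    have h3 := hD (2*k+1)
    field_simp

/- ### Product reindexing -/

open Fin.NatCast in
private lemma prod_even_eq (n m : ℕ) [NeZero n] (hnm : n = 2*m) (Δ : Fin n → ℝ) :
    ∏ i ∈ Finset.univ.filter (fun i : Fin n => i.val % 2 = 0), Δ i =
      ∏ j ∈ Finset.range m, Δ (((2*j : ℕ) : Fin n)) := by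
  refine Finset.prod_bij' (fun a _ => a.val / 2) (fun b _ => ((2*b : ℕ) : Fin n)) ?_ ?_ ?_ ?_ ?_
  · intro a ha
    simp only [Finset.mem_filter, Finset.mem_univ, true_and] at ha
    have := a.isLt
    simp only [Finset.mem_range]
    omega
  · intro b hb
    simp only [Finset.mem_range] at hb
    simp only [Finset.mem_filter, Finset.mem_univ, true_and]
    rw [Fin.val_cast_of_lt (by omega)]
    omega
  · intro a ha
    simp only [Finset.mem_filter, Finset.mem_univ, true_and] at ha
    show ((2 * (a.val / 2) : ℕ) : Fin n) = a
    have : 2 * (a.val / 2) = a.val := by omega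
    rw [this, Fin.cast_val_eq_self]
  · intro b hb
    simp only [Finset.mem_range] at hb
    show (((2*b : ℕ) : Fin n)).val / 2 = b
    rw [Fin.val_cast_of_lt (by omega)]
    omega
  · intro a ha
    simp only [Finset.mem_filter, Finset.mem_univ, true_and] at ha
    show Δ a = Δ ((2 * (a.val / 2) : ℕ) : Fin n)
    have : 2 * (a.val / 2) = a.val := by omega
    rw [this, Fin.cast_val_eq_self]

open Fin.NatCast in
private lemma prod_odd_eq (n m : ℕ) [NeZero n] (hnm : n = 2*m) (Δ : Fin n → ℝ) :
    ∏ i ∈ Finset.univ.filter (fun i : Fin n => i.val % 2 = 1), Δ i =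
      ∏ j ∈ Finset.range m, Δ (((2*j+1 : ℕ) : Fin n)) := by
  refine Finset.prod_bij' (fun a _ => a.val / 2) (fun b _ => ((2*b+1 : ℕ) : Fin n)) ?_ ?_ ?_ ?_ ?_
  · intro a ha
    simp only [Finset.mem_filter, Finset.mem_univ, true_and] at ha
    have := a.isLt
    simp only [Finset.mem_range]
    omega
  · intro b hb
    simp only [Finset.mem_range] at hb
    simp only [Finset.mem_filter, Finset.mem_univ, true_and]
    rw [Fin.val_cast_of_lt (by omega)]
    omega
  · intro a ha
    simp only [Finset.mem_filter, Finset.mem_univ, true_and] at ha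
    show ((2 * (a.val / 2) + 1 : ℕ) : Fin n) = a
    have : 2 * (a.val / 2) + 1 = a.val := by omega
    rw [this, Fin.cast_val_eq_self]
  · intro b hb
    simp only [Finset.mem_range] at hb
    show (((2*b+1 : ℕ) : Fin n)).val / 2 = b
    rw [Fin.val_cast_of_lt (by omega)]
    omega
  · intro a ha
    simp only [Finset.mem_filter, Finset.mem_univ, true_and] at ha
    show Δ a = Δ ((2 * (a.val / 2) + 1 : ℕ) : Fin n)
    have : 2 * (a.val / 2) + 1 = a.val := by omega
    rw [this, Fin.cast_val_eq_self]

/- ### The scalar characterization -/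

open Fin.NatCast in
private lemma scalar_iff' (n m : ℕ) [NeZero n] (hm : 0 < m) (hnm : n = 2*m)
    (Δ : Fin n → ℝ) (hgen : ∀ i, Δ i ≠ 0) :
    (∃ c : Fin n → ℝ, ∀ i : Fin n, c i * c (i+1) * Δ i = 1) ↔
      ∏ i ∈ Finset.univ.filter (fun i : Fin n => i.val % 2 = 0), Δ i =
        ∏ i ∈ Finset.univ.filter (fun i : Fin n => i.val % 2 = 1), Δ i := by
  have hn2 : 2 ≤ n := by omega
  have hval1 : (1 : Fin n).val = 1 := by
    rw [Fin.val_one']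
    exact Nat.mod_eq_of_lt hn2
  have hadd : ∀ i : Fin n, (i + 1).val = (i.val + 1) % n := by
    intro i
    rw [Fin.add_def, hval1]
  constructor
  · rintro ⟨c, hc⟩
    have hcne : ∀ i, c i ≠ 0 := by
      intro i hi
      have := hc i
      rw [hi] at this
      simp at this
    -- product over evens of the relation
    have key : ∀ (p : ℕ), p < 2 →
        (∏ i ∈ Finset.univ.filter (fun i : Fin n => i.val % 2 = p), c i) *
        (∏ i ∈ Finset.univ.filter (fun i : Fin n => i.val % 2 = p), c (i + 1)) *
        (∏ i ∈ Finset.univ.filter (fun i : Fin n => i.val % 2 = p), Δ i) = 1 := by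
      intro p hp
      rw [← Finset.prod_mul_distrib, ← Finset.prod_mul_distrib]
      exact Finset.prod_eq_one fun i _ => hc i
    -- shift: the +1 products equal the product over the other parity
    have shift : ∀ (p : ℕ), p < 2 →
        (∏ i ∈ Finset.univ.filter (fun i : Fin n => i.val % 2 = p), c (i + 1)) =
        (∏ i ∈ Finset.univ.filter (fun i : Fin n => i.val % 2 = 1 - p), c i) := by
      intro p hp
      refine Finset.prod_bij' (fun a _ => a + 1) (fun b _ => b - 1) ?_ ?_ ?_ ?_ ?_
      · intro a ha
        simp only [Finset.mem_filter, Finset.mem_univ, true_and] at ha ⊢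
        rw [hadd a]
        have hlt := a.isLt
        rcases Nat.lt_or_ge (a.val + 1) n with h | h
        · rw [Nat.mod_eq_of_lt h]
          interval_cases p <;> omega
        · have he : a.val + 1 = n := by omega
          rw [he, Nat.mod_self]
          interval_cases p <;> omega
      · intro b hb
        simp only [Finset.mem_filter, Finset.mem_univ, true_and] at hb ⊢
        have hlt := b.isLt
        have hb1 : (b - 1).val = (n - 1 + b.val) % n := by
          rw [Fin.sub_def, hval1]
        rw [hb1]
        rcases Nat.lt_or_ge (n - 1 + b.val) n with h | h
        · rw [Nat.mod_eq_of_lt h]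
          interval_cases p <;> omega
        · have hbv : 1 ≤ b.val := by omega
          have he : n - 1 + b.val = n + (b.val - 1) := by omega
          have hmod : (b.val - 1) % n = b.val - 1 := Nat.mod_eq_of_lt (by omega)
          rw [he, Nat.add_mod_left, hmod]
          interval_cases p <;> omega
      · intro a _; exact add_sub_cancel_right a 1
      · intro b _; exact sub_add_cancel b 1
      · intro a _; rfl
    have k0 := key 0 (by omega)
    have k1 := key 1 (by omega)
    rw [shift 0 (by omega)] at k0
    rw [shift 1 (by omega)] at k1
    norm_num at k0 k1
    set A := ∏ i ∈ Finset.univ.filter (fun i : Fin n => i.val % 2 = 0), c i with hA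
    set B := ∏ i ∈ Finset.univ.filter (fun i : Fin n => i.val % 2 = 1), c i with hB
    have hC : A * B ≠ 0 := by
      apply mul_ne_zero <;> exact Finset.prod_ne_zero_iff.mpr fun i _ => hcne i
    have k1' : A * B * (∏ i ∈ Finset.univ.filter (fun i : Fin n => i.val % 2 = 1), Δ i) = 1 := by
      rw [mul_comm A B]; exact k1
    have hmm : A * B * (∏ i ∈ Finset.univ.filter (fun i : Fin n => i.val % 2 = 0), Δ i) =
        A * B * (∏ i ∈ Finset.univ.filter (fun i : Fin n => i.val % 2 = 1), Δ i) :=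
      k0.trans k1'.symm
    exact mul_left_cancel₀ hC hmm
  · intro hP
    set D : ℕ → ℝ := fun k => Δ ((k : ℕ) : Fin n) with hD
    have hDne : ∀ k, D k ≠ 0 := fun k => hgen _
    refine ⟨fun i => dseq' D i.val, fun i => ?_⟩
    have hΔi : Δ i = D i.val := by simp [hD, Fin.cast_val_eq_self]
    show dseq' D i.val * dseq' D (i + 1).val * Δ i = 1
    rcases lt_or_eq_of_le (Nat.succ_le_of_lt i.isLt) with hlt | heq
    · -- i.val + 1 < n
      have h1 : (i + 1).val = i.val + 1 := by
        rw [hadd i, Nat.mod_eq_of_lt hlt]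
      rw [h1, hΔi]
      exact dseq'_rec D hDne i.val
    · -- i.val = n - 1
      have hival : i.val = n - 1 := by omega
      have h1 : (i + 1).val = 0 := by
        rw [hadd i, hival]
        have : n - 1 + 1 = n := by omega
        rw [this, Nat.mod_self]
      rw [h1, hΔi, hival]
      show dseq' D (n-1) * dseq' D 0 * D (n-1) = 1
      have hd0 : dseq' D 0 = 1 := rfl
      rw [hd0, mul_one]
      -- n - 1 = 2*(m-1) + 1
      have hn1 : n - 1 = 2*(m-1) + 1 := by omega
      have e3 : dseq' D (2*(m-1)+1) = (dseq' D (2*(m-1)) * D (2*(m-1)))⁻¹ := rfl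
      rw [hn1, e3]
      -- need: dseq' D (2*(m-1)) * D (2*(m-1)) = D (2*(m-1)+1)
      have hcl := dseq'_closed D hDne (m-1)
      have hPe := prod_even_eq n m hnm Δ
      have hPo := prod_odd_eq n m hnm Δ
      rw [hPe, hPo] at hP
      have hm1 : m = (m - 1) + 1 := by omega
      rw [hm1, Finset.prod_range_succ, Finset.prod_range_succ] at hP
      -- hP : ∏_{j<m-1} D(2j) * D(2(m-1)) = ∏_{j<m-1} D(2j+1) * D(2(m-1)+1)
      have hPE : (∏ j ∈ Finset.range (m-1), D (2*j)) * D (2*(m-1)) =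
          (∏ j ∈ Finset.range (m-1), D (2*j+1)) * D (2*(m-1)+1) := hP
      have hprodne : (∏ j ∈ Finset.range (m-1), D (2*j+1)) ≠ 0 :=
        Finset.prod_ne_zero_iff.mpr fun j _ => hDne _
      have hdne := dseq'_ne_zero D hDne (2*(m-1))
      have h2ne := hDne (2*(m-1))
      have hgoal : dseq' D (2*(m-1)) * D (2*(m-1)) = D (2*(m-1)+1) := by
        have := hcl
        -- dseq * ∏odd = ∏even; so dseq * D(2(m-1)) * ∏odd = ∏even * D(2(m-1)) = ∏odd * D(2(m-1)+1)
        have step : dseq' D (2*(m-1)) * D (2*(m-1)) * (∏ j ∈ Finset.range (m-1), D (2*j+1)) =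
            (∏ j ∈ Finset.range (m-1), D (2*j+1)) * D (2*(m-1)+1) := by
          calc dseq' D (2*(m-1)) * D (2*(m-1)) * (∏ j ∈ Finset.range (m-1), D (2*j+1))
              = (dseq' D (2*(m-1)) * (∏ j ∈ Finset.range (m-1), D (2*j+1))) * D (2*(m-1)) := by ring
            _ = (∏ j ∈ Finset.range (m-1), D (2*j)) * D (2*(m-1)) := by rw [hcl]
            _ = (∏ j ∈ Finset.range (m-1), D (2*j+1)) * D (2*(m-1)+1) := hPE
        have := mul_right_cancel₀ hprodne (by linarith [step] : dseq' D (2*(m-1)) * D (2*(m-1)) * (∏ j ∈ Finset.range (m-1), D (2*j+1)) = D (2*(m-1)+1) * (∏ j ∈ Finset.range (m-1), D (2*j+1)))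
        exact this
      rw [hgoal]
      exact inv_mul_cancel₀ (hDne _)


/-- Let `n = 2m` be even and `v 0, …, v (n-1)` the edge vectors of a
generic closed `n`-gon (they sum to zero and all determinants `Δ i = ⟨v i, [v (i+1), v (i+2)]⟩`
are nonzero, indices mod `n`).  Then a support system exists iff the product of the
determinants with odd (1-based) index equals the product of those with even (1-based) index.
Here `v i` (0-based) is the paper's `v_{i+1}`, so the paper's `Δ_1·Δ_3·…·Δ_{2m-1}` is the
product over 0-based indices `i` with `i % 2 = 0`, and `Δ_2·Δ_4·…·Δ_{2m}` is the product
over `i % 2 = 1`. -/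
theorem even_polygon_regular_iff (n : ℕ) (hn : Even n) [NeZero n]
    (v : Fin n → Fin 3 → ℝ)
    (hclosed : ∑ i, v i = 0)
    (Δ : Fin n → ℝ)
    (hΔ : ∀ i, Δ i = v i ⬝ᵥ (v (i + 1) ⨯₃ v (i + 2)))
    (hgen : ∀ i, Δ i ≠ 0) :
    (∃ u : Fin n → Fin 3 → ℝ, ∀ i, u i ⨯₃ u (i + 1) = v (i + 1)) ↔
      ∏ i ∈ Finset.univ.filter (fun i : Fin n => i.val % 2 = 0), Δ i =
        ∏ i ∈ Finset.univ.filter (fun i : Fin n => i.val % 2 = 1), Δ i := by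
  obtain ⟨m, hm⟩ := hn
  have hnm : n = 2 * m := by omega
  have hm0 : 0 < m := by
    have := NeZero.pos n
    omega
  -- nonvanishing facts
  have hvne : ∀ i : Fin n, v (i + 1) ≠ 0 := by
    intro i hvi
    apply hgen i
    rw [hΔ i, hvi]
    simp [map_zero]
  have hwne : ∀ i : Fin n, v i ⨯₃ v (i + 1) ≠ 0 := by
    intro i hw
    apply hgen i
    rw [hΔ i, triple_cyc', hw, zero_dotProduct]
  -- the cross product of consecutive supports
  have hww : ∀ i : Fin n, (v i ⨯₃ v (i+1)) ⨯₃ (v (i+1) ⨯₃ v (i+1+1)) = Δ i • v (i+1) := by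
    intro i
    have : i + 1 + 1 = i + 2 := by open Fin.CommRing in ring
    rw [this, cross_cross_mid', ← hΔ i]
  rw [← scalar_iff' n m hm0 hnm Δ hgen]
  constructor
  · rintro ⟨u, hu⟩
    have hperp1 : ∀ i : Fin n, u i ⬝ᵥ v (i + 1) = 0 := by
      intro i
      rw [← hu i]
      exact dot_self_cross _ _
    have hperp0 : ∀ i : Fin n, u i ⬝ᵥ v i = 0 := by
      intro i
      have := hu (i - 1)
      rw [sub_add_cancel] at this
      rw [← this]
      exact dot_cross_self _ _
    have hch : ∀ i : Fin n, ∃ t : ℝ, u i = t • (v i ⨯₃ v (i + 1)) := by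
      intro i
      exact exists_smul_of_perp' (u i) (v i) (v (i+1)) (hwne i) (hperp0 i) (hperp1 i)
    choose c hc using hch
    refine ⟨c, fun i => ?_⟩
    have := hu i
    rw [hc i, hc (i+1), smul_cross_smul', hww i, smul_smul] at this
    exact smul_self_eq_self _ _ (hvne i) this
  · rintro ⟨c, hc⟩
    refine ⟨fun i => c i • (v i ⨯₃ v (i + 1)), fun i => ?_⟩
    rw [smul_cross_smul', hww i, smul_smul, hc i, one_smul]
end

section
/- Let n be even and let u_1,…,u_n ∈ ℝ³ be a support system for a closed n-gon with edge vectors v_1,…,v_n. Then for every nonzero real α, the vectors u'_1,…,u'_n defined by u'_i = α·u_i for even i and u'_i = u_i/α for odd i also form a support system for the same polygon. In particular a regular polygon with an even number of edges has infinitely many support systems. -/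
open Matrix

private lemma parity_succ {n : ℕ} (hn : Even n) [NeZero n] (i : Fin n) :
    ((i + 1 : Fin n)).val % 2 = (i.val + 1) % 2 := by
  have hn2 : 2 ≤ n := by
    rcases Nat.lt_or_ge n 2 with h | h
    · interval_cases n
      · exact absurd rfl (NeZero.ne 0)
      · simp at hn
    · exact h
  have h1 : (1 : Fin n).val = 1 := by
    rw [Fin.val_one']
    exact Nat.mod_eq_of_lt hn2
  have : ((i + 1 : Fin n)).val = (i.val + 1) % n := by
    rw [Fin.add_def, h1]
  rw [this, Nat.mod_mod_of_dvd _ hn.two_dvd]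

private lemma scaled_support (n : ℕ) (hn : Even n) [NeZero n]
    (v : Fin n → Fin 3 → ℝ) (u : Fin n → Fin 3 → ℝ)
    (hu : ∀ i, u i ⨯₃ u (i + 1) = v (i + 1))
    (β : ℝ) (hβ : β ≠ 0) (i : Fin n) :
    (if i.val % 2 = 1 then β • u i else β⁻¹ • u i) ⨯₃
      (if (i + 1 : Fin n).val % 2 = 1 then β • u (i + 1) else β⁻¹ • u (i + 1))
      = v (i + 1) := by
  have hsucc := parity_succ hn i
  have hbb : β * β⁻¹ = 1 := mul_inv_cancel₀ hβ
  have hbb' : β⁻¹ * β = 1 := inv_mul_cancel₀ hβ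
  rcases Nat.mod_two_eq_zero_or_one i.val with h | h
  · have h' : (i + 1 : Fin n).val % 2 = 1 := by
      rw [hsucc, Nat.add_mod, h]
    rw [if_neg (by rw [h]; norm_num), if_pos h']
    rw [show (β⁻¹ • u i) ⨯₃ (β • u (i + 1)) = β⁻¹ • β • (u i ⨯₃ u (i + 1)) by
      simp only [_root_.map_smul, LinearMap.smul_apply]; rw [smul_comm]]
    rw [smul_smul, hbb', one_smul, hu]
  · have h' : (i + 1 : Fin n).val % 2 = 0 := by
      rw [hsucc, Nat.add_mod, h]
    rw [if_pos h, if_neg (by rw [h']; norm_num)]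
    rw [show (β • u i) ⨯₃ (β⁻¹ • u (i + 1)) = β • β⁻¹ • (u i ⨯₃ u (i + 1)) by
      simp only [_root_.map_smul, LinearMap.smul_apply]; rw [smul_comm]]
    rw [smul_smul, hbb, one_smul, hu]

/-- Let `n` be even and `u` a support system for a closed `n`-gon with
edge vectors `v` (indices mod `n`; `v i` (0-based) is the paper's `v_{i+1}`).  For any
nonzero real `α`, the rescaled vectors `u' i = α • u i` for even (1-based) index, i.e.
`i.val % 2 = 1` in 0-based indexing, and `u' i = α⁻¹ • u i` for odd (1-based) index,
again form a support system for the same polygon.  In particular the set of support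
systems is infinite. -/
theorem even_polygon_rescaled_support (n : ℕ) (hn : Even n) [NeZero n]
    (v : Fin n → Fin 3 → ℝ)
    (hclosed : ∑ i, v i = 0)
    (u : Fin n → Fin 3 → ℝ)
    (hu : ∀ i, u i ⨯₃ u (i + 1) = v (i + 1))
    (α : ℝ) (hα : α ≠ 0)
    (u' : Fin n → Fin 3 → ℝ)
    (hu' : ∀ i : Fin n, u' i = if i.val % 2 = 1 then α • u i else α⁻¹ • u i) :
    (∀ i, u' i ⨯₃ u' (i + 1) = v (i + 1)) ∧
      {w : Fin n → Fin 3 → ℝ | ∀ i, w i ⨯₃ w (i + 1) = v (i + 1)}.Infinite := by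
  constructor
  · intro i
    rw [hu' i, hu' (i + 1)]
    exact scaled_support n hn v u hu α hα i
  · by_cases hz : ∀ j, u j = 0
    · -- all zero: v = 0, constant systems work
      have hv : ∀ i : Fin n, v (i + 1) = 0 := by
        intro i
        rw [← hu i, hz i]
        simp [crossProduct]
      set S := {w : Fin n → Fin 3 → ℝ | ∀ i, w i ⨯₃ w (i + 1) = v (i + 1)}
      have : Set.InjOn (fun c : Fin 3 → ℝ => (fun _ : Fin n => c)) Set.univ := by
        intro a _ b _ hab
        exact congrFun hab ⟨0, Nat.pos_of_ne_zero (NeZero.ne n)⟩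
      have him : (fun c : Fin 3 → ℝ => (fun _ : Fin n => c)) '' Set.univ ⊆ S := by
        rintro _ ⟨c, -, rfl⟩ i
        rw [hv i]
        simp [cross_self]
      exact Set.Infinite.mono him
        ((Set.infinite_univ.image this))
    · push_neg at hz
      obtain ⟨j, hj⟩ := hz
      set F : ℝ → (Fin n → Fin 3 → ℝ) :=
        fun β => fun i => if i.val % 2 = 1 then β • u i else β⁻¹ • u i with hF
      have hinj : Set.InjOn F {β : ℝ | β ≠ 0} := by
        intro a _ b _ hab
        have := congrFun (congrFun hab j)
        by_cases hp : j.val % 2 = 1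
        · have h1 := congrFun hab j
          simp only [hF, if_pos hp] at h1
          obtain ⟨k, hk⟩ := Function.ne_iff.mp hj
          have := congrFun h1 k
          simp only [Pi.smul_apply, smul_eq_mul, Pi.zero_apply] at this hk
          exact mul_right_cancel₀ hk this
        · have h1 := congrFun hab j
          simp only [hF, if_neg hp] at h1
          obtain ⟨k, hk⟩ := Function.ne_iff.mp hj
          have := congrFun h1 k
          simp only [Pi.smul_apply, smul_eq_mul, Pi.zero_apply] at this hk
          exact inv_injective (mul_right_cancel₀ hk this)
      have him : F '' {β : ℝ | β ≠ 0} ⊆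
          {w : Fin n → Fin 3 → ℝ | ∀ i, w i ⨯₃ w (i + 1) = v (i + 1)} := by
        rintro _ ⟨β, hβ, rfl⟩ i
        exact scaled_support n hn v u hu β hβ i
      have hne : ({β : ℝ | β ≠ 0} : Set ℝ).Infinite := by
        have : ({β : ℝ | β ≠ 0} : Set ℝ) = {(0 : ℝ)}ᶜ := by
          ext x; simp
        rw [this]
        exact (Set.finite_singleton (0 : ℝ)).infinite_compl
      exact Set.Infinite.mono him (hne.image hinj)
end

section
/- Let n be odd and let v_1,…,v_n ∈ ℝ³ be the edge vectors of a generic closed n-gon. If u_1,…,u_n and w_1,…,w_n are both support systems for this polygon, then either w_i = u_i for all i, or w_i = −u_i for all i. That is, for odd n the support system of a regular generic polygon is unique up to sign. -/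
open Matrix

lemma aux_cross_perp (x a b : Fin 3 → ℝ) (ha : x ⬝ᵥ a = 0) (hb : x ⬝ᵥ b = 0) :
    x ⨯₃ (a ⨯₃ b) = 0 := by
  simp [crossProduct, dotProduct, Fin.sum_univ_three] at ha hb ⊢
  refine ⟨?_, ?_, ?_⟩
  · linear_combination a 0 * hb - b 0 * ha
  · linear_combination a 1 * hb - b 1 * ha
  · linear_combination a 2 * hb - b 2 * ha

lemma aux_collinear (x z : Fin 3 → ℝ) (h : x ⨯₃ z = 0) (hz : z ≠ 0) :
    ∃ t : ℝ, x = t • z := by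
  have hzz : z ⬝ᵥ z ≠ 0 := fun h0 => hz ((dotProduct_self_eq_zero).mp h0)
  refine ⟨(x ⬝ᵥ z) / (z ⬝ᵥ z), ?_⟩
  have h0 := congrFun h 0
  have h1 := congrFun h 1
  have h2 := congrFun h 2
  simp [crossProduct] at h0 h1 h2
  funext i
  simp only [Pi.smul_apply, smul_eq_mul, div_mul_eq_mul_div, eq_div_iff hzz]
  fin_cases i
  · show x 0 * (z ⬝ᵥ z) = x ⬝ᵥ z * z 0
    simp only [dotProduct, Fin.sum_univ_three]
    linear_combination z 1 * h2 - z 2 * h1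
  · show x 1 * (z ⬝ᵥ z) = x ⬝ᵥ z * z 1
    simp only [dotProduct, Fin.sum_univ_three]
    linear_combination z 2 * h0 - z 0 * h2
  · show x 2 * (z ⬝ᵥ z) = x ⬝ᵥ z * z 2
    simp only [dotProduct, Fin.sum_univ_three]
    linear_combination z 0 * h1 - z 1 * h0

/-- Let `n` be odd and `v` the edge vectors of a generic closed `n`-gon
(indices mod `n`).  If `u` and `w` are both support systems for this polygon, then either
`w i = u i` for all `i` or `w i = -u i` for all `i`: the support system is unique up to sign. -/
theorem odd_polygon_support_unique_up_to_sign (n : ℕ) (hn : Odd n) [NeZero n]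
    (v : Fin n → Fin 3 → ℝ)
    (hclosed : ∑ i, v i = 0)
    (Δ : Fin n → ℝ)
    (hΔ : ∀ i, Δ i = v i ⬝ᵥ (v (i + 1) ⨯₃ v (i + 2)))
    (hgen : ∀ i, Δ i ≠ 0)
    (u w : Fin n → Fin 3 → ℝ)
    (hu : ∀ i, u i ⨯₃ u (i + 1) = v (i + 1))
    (hw : ∀ i, w i ⨯₃ w (i + 1) = v (i + 1)) :
    (∀ i, w i = u i) ∨ (∀ i, w i = -u i) := by
  have e1 : ∀ i : Fin n, i - 1 + 1 = i := fun i => by open Fin.CommRing in ring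
  have e2 : ∀ i : Fin n, i - 1 + 2 = i + 1 := fun i => by open Fin.CommRing in ring
  have hv : ∀ i, v i ≠ 0 := by
    intro i h0
    apply hgen i
    rw [hΔ i, h0, zero_dotProduct]
  have hcross : ∀ i : Fin n, v i ⨯₃ v (i + 1) ≠ 0 := by
    intro i h0
    apply hgen (i - 1)
    rw [hΔ (i - 1), e1, e2, h0, dotProduct_zero]
  -- the v's with shifted index
  have hu' : ∀ i : Fin n, u (i - 1) ⨯₃ u i = v i := by
    intro i
    have := hu (i - 1); rwa [e1] at this
  have hw' : ∀ i : Fin n, w (i - 1) ⨯₃ w i = v i := by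
    intro i
    have := hw (i - 1); rwa [e1] at this
  -- orthogonality
  have hwv1 : ∀ i, w i ⬝ᵥ v (i + 1) = 0 := fun i => by
    rw [← hw i]; exact dot_self_cross _ _
  have hwv0 : ∀ i, w i ⬝ᵥ v i = 0 := fun i => by
    rw [← hw' i]; exact dot_cross_self _ _
  have huv1 : ∀ i, u i ⬝ᵥ v (i + 1) = 0 := fun i => by
    rw [← hu i]; exact dot_self_cross _ _
  have huv0 : ∀ i, u i ⬝ᵥ v i = 0 := fun i => by
    rw [← hu' i]; exact dot_cross_self _ _
  have hune : ∀ i, u i ≠ 0 := by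
    intro i h0
    apply hv (i + 1)
    rw [← hu i, h0]
    simp
  -- each w i is a multiple of u i
  have hpar : ∀ i, ∃ c : ℝ, w i = c • u i := by
    intro i
    have hwz : w i ⨯₃ (v i ⨯₃ v (i + 1)) = 0 :=
      aux_cross_perp _ _ _ (hwv0 i) (hwv1 i)
    have huz : u i ⨯₃ (v i ⨯₃ v (i + 1)) = 0 :=
      aux_cross_perp _ _ _ (huv0 i) (huv1 i)
    obtain ⟨t, ht⟩ := aux_collinear _ _ hwz (hcross i)
    obtain ⟨s, hs⟩ := aux_collinear _ _ huz (hcross i)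
    have hs0 : s ≠ 0 := by
      rintro rfl
      rw [zero_smul] at hs
      exact hune i hs
    exact ⟨t / s, by rw [ht, hs, smul_smul, div_mul_cancel₀ _ hs0]⟩
  choose c hc using hpar
  have hprod : ∀ i, c i * c (i + 1) = 1 := by
    intro i
    have hbil : w i ⨯₃ w (i + 1) = (c i * c (i + 1)) • (u i ⨯₃ u (i + 1)) := by
      rw [hc i, hc (i + 1), _root_.map_smul, _root_.map_smul crossProduct,
        LinearMap.smul_apply, smul_smul, mul_comm (c (i + 1))]
    rw [hw i, hu i] at hbil
    have : (c i * c (i + 1) - 1) • v (i + 1) = 0 := by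
      rw [sub_smul, one_smul, ← hbil, sub_self]
    rcases smul_eq_zero.mp this with h | h
    · linarith [sub_eq_zero.mp h]
    · exact absurd h (hv (i + 1))
  have hcne : ∀ i, c i ≠ 0 := by
    intro i h0
    have := hprod i
    rw [h0, zero_mul] at this
    exact one_ne_zero this.symm
  have hstep : ∀ i, c (i + 2) = c i := by
    intro i
    have a := hprod i
    have b := hprod (i + 1)
    have e : i + 1 + 1 = i + 2 := by open Fin.CommRing in ring
    rw [e] at b
    have : c (i + 1) * c (i + 2) = c (i + 1) * c i := by
      rw [b, mul_comm]; exact a.symm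
    exact mul_left_cancel₀ (hcne (i + 1)) this
  open Fin.CommRing in
  have hkey : ∀ k : ℕ, c ((2 * k : ℕ) : Fin n) = c 0 := by
    intro k
    induction k with
    | zero => norm_num
    | succ k ih =>
      have : ((2 * (k + 1) : ℕ) : Fin n) = ((2 * k : ℕ) : Fin n) + 2 := by
        push_cast; ring
      rw [this, hstep, ih]
  have hconst : ∀ i, c i = c 0 := by
    intro i
    have h2 : 2 * ((n + 1) / 2) = n + 1 := by
      obtain ⟨m, hm⟩ := hn; omega
    have hnat : 2 * (i.val * ((n + 1) / 2)) = i.val + i.val * n := by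
      rw [mul_left_comm, h2]; ring
    open Fin.CommRing in
    have hcast : ((2 * (i.val * ((n + 1) / 2)) : ℕ) : Fin n) = i := by
      apply Fin.ext
      rw [Fin.val_natCast, hnat, Nat.add_mul_mod_self_right,
        Nat.mod_eq_of_lt i.isLt]
    rw [← hcast, hkey]
  have hsq := hprod 0
  rw [hconst (0 + 1)] at hsq
  rcases mul_self_eq_one_iff.mp hsq with h | h
  · left
    intro i
    rw [hc i, hconst i, h, one_smul]
  · right
    intro i
    rw [hc i, hconst i, h, neg_one_smul]
end

section
/- Let n be odd and let v_1,…,v_n ∈ ℝ³ be the edge vectors of a generic closed n-gon with Δ_1·Δ_2·…·Δ_n < 0 (so the polygon is not regular). Let r : ℝ³ → ℝ³ be the mirror reflection r(x,y,z) = (x,y,−z). Then the mirror-symmetric polygon with edge vectors r(v_1),…,r(v_n) is a generic closed n-gon that is regular. -/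
open Matrix

/-- Auxiliary sequence: `gSeq c 0 = 1`, `gSeq c (k+1) = c k / gSeq c k`. -/
noncomputable def gSeq (c : ℕ → ℝ) : ℕ → ℝ :=
  fun k => Nat.rec 1 (fun k' gk => c k' / gk) k

@[simp] lemma gSeq_zero (c : ℕ → ℝ) : gSeq c 0 = 1 := rfl

@[simp] lemma gSeq_succ (c : ℕ → ℝ) (k : ℕ) : gSeq c (k + 1) = c k / gSeq c k := rfl

lemma gSeq_ne_zero (c : ℕ → ℝ) (hc : ∀ k, c k ≠ 0) : ∀ k, gSeq c k ≠ 0 := by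
  intro k
  induction k with
  | zero => simp
  | succ k ih => simpa using div_ne_zero (hc k) ih

lemma gSeq_mul (c : ℕ → ℝ) (hc : ∀ k, c k ≠ 0) (k : ℕ) :
    gSeq c k * gSeq c (k + 1) = c k := by
  have h := gSeq_ne_zero c hc k
  rw [gSeq_succ]
  field_simp

lemma gSeq_pos (c : ℕ → ℝ) (hc : ∀ k, c k ≠ 0) (n : ℕ)
    (hpos : 0 < ∏ k ∈ Finset.range n, c k) : 0 < gSeq c n := by
  have key : ∏ k ∈ Finset.range n, (gSeq c k * gSeq c (k + 1)) =
      ∏ k ∈ Finset.range n, c k :=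
    Finset.prod_congr rfl fun k _ => gSeq_mul c hc k
  rw [Finset.prod_mul_distrib] at key
  have h1 : ∏ k ∈ Finset.range n, gSeq c (k + 1) =
      gSeq c n * ∏ k ∈ Finset.range n, gSeq c k := by
    have := Finset.prod_range_succ' (fun k => gSeq c k) n
    rw [Finset.prod_range_succ] at this
    simpa [mul_comm] using this.symm
  rw [h1] at key
  have hgn0 : (∏ k ∈ Finset.range n, gSeq c k) ≠ 0 :=
    Finset.prod_ne_zero_iff.mpr fun k _ => gSeq_ne_zero c hc k
  have hsq : 0 < (∏ k ∈ Finset.range n, gSeq c k) ^ 2 := by positivity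
  have : (∏ k ∈ Finset.range n, gSeq c k) ^ 2 * gSeq c n =
      ∏ k ∈ Finset.range n, c k := by rw [← key]; ring
  nlinarith [hsq, hpos]

/-- Let `n` be odd and `v` the edge vectors of a generic closed `n`-gon
with `Δ_1·…·Δ_n < 0` (so the polygon is not regular).  Let `r` be the mirror reflection
`r (x, y, z) = (x, y, -z)`.  Then the mirror-symmetric polygon with edge vectors
`r (v i)` is a generic closed `n`-gon that is regular. -/
theorem odd_polygon_mirror_regular (n : ℕ) (hn : Odd n) [NeZero n]
    (v : Fin n → Fin 3 → ℝ)
    (hclosed : ∑ i, v i = 0)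
    (Δ : Fin n → ℝ)
    (hΔ : ∀ i, Δ i = v i ⬝ᵥ (v (i + 1) ⨯₃ v (i + 2)))
    (hgen : ∀ i, Δ i ≠ 0)
    (hneg : ∏ i, Δ i < 0)
    (r : (Fin 3 → ℝ) → Fin 3 → ℝ)
    (hr : ∀ x : Fin 3 → ℝ, r x = ![x 0, x 1, -x 2]) :
    (∑ i, r (v i) = 0) ∧
      (∀ i : Fin n, r (v i) ⬝ᵥ (r (v (i + 1)) ⨯₃ r (v (i + 2))) ≠ 0) ∧
      (∃ u : Fin n → Fin 3 → ℝ, ∀ i, u i ⨯₃ u (i + 1) = r (v (i + 1))) := by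
  have hre : ∀ a b c : Fin 3 → ℝ, r a ⬝ᵥ (r b ⨯₃ r c) = -(a ⬝ᵥ (b ⨯₃ c)) := by
    intro a b c
    simp [hr, cross_apply, dotProduct, Fin.sum_univ_three]
    ring
  have triple : ∀ a b c : Fin 3 → ℝ,
      (a ⨯₃ b) ⨯₃ (b ⨯₃ c) = (a ⬝ᵥ (b ⨯₃ c)) • b := by
    intro a b c
    funext j
    fin_cases j <;>
      simp [cross_apply, dotProduct, Fin.sum_univ_three] <;> ring
  have smul_cross : ∀ (x y : ℝ) (a b : Fin 3 → ℝ),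
      (x • a) ⨯₃ (y • b) = (x * y) • (a ⨯₃ b) := by
    intro x y a b
    funext j
    fin_cases j <;> simp [cross_apply] <;> ring
  refine ⟨?_, ?_, ?_⟩
  · funext j
    have h0 := congrFun hclosed j
    simp only [Finset.sum_apply, Pi.zero_apply] at h0 ⊢
    fin_cases j <;> simp [hr] <;> simp_all
  · intro i
    rw [hre, ← hΔ i]
    simpa using hgen i
  · -- the support system
    open Fin.NatCast in set c : ℕ → ℝ := fun k => -(Δ ((k : ℕ) : Fin n))⁻¹ with hc_def
    have hc : ∀ k, c k ≠ 0 := by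
      intro k
      simp [hc_def, hgen _]
    have hprod : 0 < ∏ k ∈ Finset.range n, c k := by
      have h1 : ∏ k ∈ Finset.range n, c k = ∏ i : Fin n, -(Δ i)⁻¹ := by
        rw [← Fin.prod_univ_eq_prod_range (fun k => c k) n]
        exact Finset.prod_congr rfl fun i _ => by simp [hc_def]
      have h2 : ∏ i : Fin n, -(Δ i)⁻¹ = -(∏ i : Fin n, Δ i)⁻¹ := by
        calc ∏ i : Fin n, -(Δ i)⁻¹ = ∏ i : Fin n, (-1) * (Δ i)⁻¹ := by
              refine Finset.prod_congr rfl fun i _ => by ring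
          _ = (-1) ^ n * ∏ i : Fin n, (Δ i)⁻¹ := by
              rw [Finset.prod_mul_distrib, Finset.prod_const, Finset.card_univ,
                Fintype.card_fin]
          _ = -(∏ i : Fin n, Δ i)⁻¹ := by
              rw [hn.neg_one_pow, ← Finset.prod_inv_distrib]; ring
      rw [h1, h2]
      have : (∏ i : Fin n, Δ i)⁻¹ < 0 := inv_neg''.mpr hneg
      linarith
    have hg0 : ∀ k, gSeq c k ≠ 0 := gSeq_ne_zero c hc
    have hgn : 0 < gSeq c n := gSeq_pos c hc n hprod
    set s := Real.sqrt (gSeq c n) with hs_def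
    have hs : 0 < s := Real.sqrt_pos.mpr hgn
    have hs2 : s * s = gSeq c n := Real.mul_self_sqrt hgn.le
    set t : Fin n → ℝ := fun i => gSeq c i.val * (if Even i.val then s else s⁻¹)
      with ht_def
    have hval : ∀ i : Fin n, (i + 1).val = if i.val + 1 = n then 0 else i.val + 1 := by
      intro i
      have h2 := Fin.val_add_eq_ite i 1
      rw [Fin.val_one' n] at h2
      have hlt := i.isLt
      have hlt2 := (i + 1).isLt
      rcases Nat.lt_or_ge 1 n with hgt | hle
      · rw [Nat.mod_eq_of_lt hgt] at h2
        rw [h2]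
        split_ifs <;> omega
      · have hn1 : n = 1 := by
          have := Nat.pos_of_ne_zero (NeZero.ne n)
          omega
        rw [if_pos (by omega)]
        omega
    have hkey : ∀ i : Fin n, t i * t (i + 1) = c i.val := by
      intro i
      rw [ht_def]
      simp only []
      rw [hval i]
      by_cases hw : i.val + 1 = n
      · rw [if_pos hw]
        have hkev : Even i.val := by
          have hnn : Even (n - 1) := Nat.Odd.sub_odd hn odd_one
          have : i.val = n - 1 := by omega
          rwa [this]
        rw [if_pos hkev]
        rw [gSeq_zero, if_pos (Even.zero)]
        have hmul := gSeq_mul c hc i.val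
        rw [hw] at hmul
        calc gSeq c i.val * s * (1 * s) = gSeq c i.val * (s * s) := by ring
          _ = gSeq c i.val * gSeq c n := by rw [hs2]
          _ = c i.val := hmul
      · rw [if_neg hw]
        have hmul := gSeq_mul c hc i.val
        rcases Nat.even_or_odd i.val with he | ho
        · rw [if_pos he, if_neg (by simpa [Nat.even_add_one] using he)]
          calc gSeq c i.val * s * (gSeq c (i.val + 1) * s⁻¹)
              = gSeq c i.val * gSeq c (i.val + 1) * (s * s⁻¹) := by ring
            _ = c i.val := by rw [mul_inv_cancel₀ hs.ne', hmul, mul_one]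
        · rw [if_neg (Nat.not_even_iff_odd.mpr ho),
            if_pos (Nat.even_add_one.mpr (Nat.not_even_iff_odd.mpr ho))]
          calc gSeq c i.val * s⁻¹ * (gSeq c (i.val + 1) * s)
              = gSeq c i.val * gSeq c (i.val + 1) * (s * s⁻¹) := by ring
            _ = c i.val := by rw [mul_inv_cancel₀ hs.ne', hmul, mul_one]
    refine ⟨fun i => t i • (r (v i) ⨯₃ r (v (i + 1))), ?_⟩
    intro i
    have h12 : (i + 1) + 1 = i + 2 := by ext; simp [Fin.val_add, Nat.add_mod_mod, Nat.mod_add_mod, add_assoc]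
    simp only
    rw [h12, smul_cross, triple, hre, smul_smul, hkey i]
    have hci : c i.val = -(Δ i)⁻¹ := by simp [hc_def]
    rw [hci, ← hΔ i]
    have : -(Δ i)⁻¹ * -Δ i = 1 := by
      rw [neg_mul_neg, inv_mul_cancel₀ (hgen i)]
    rw [this, one_smul]
end

section
/- Every generic closed quadrangle is regular: if v_1, v_2, v_3, v_4 ∈ ℝ³ satisfy v_1+v_2+v_3+v_4 = 0 and Δ_i ≠ 0 for i = 1,…,4, then there exist u_1, u_2, u_3, u_4 ∈ ℝ³ with [u_1,u_2] = v_2, [u_2,u_3] = v_3, [u_3,u_4] = v_4 and [u_4,u_1] = v_1. -/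
open Matrix

/-- Every generic closed quadrangle is regular: if `v₁+v₂+v₃+v₄ = 0` and
all four determinants are nonzero, then there is a support system `u₁, u₂, u₃, u₄`. -/
theorem quadrangle_regular (v₁ v₂ v₃ v₄ : Fin 3 → ℝ)
    (hclosed : v₁ + v₂ + v₃ + v₄ = 0)
    (hΔ₁ : v₁ ⬝ᵥ (v₂ ⨯₃ v₃) ≠ 0)
    (hΔ₂ : v₂ ⬝ᵥ (v₃ ⨯₃ v₄) ≠ 0)
    (hΔ₃ : v₃ ⬝ᵥ (v₄ ⨯₃ v₁) ≠ 0)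
    (hΔ₄ : v₄ ⬝ᵥ (v₁ ⨯₃ v₂) ≠ 0) :
    ∃ u₁ u₂ u₃ u₄ : Fin 3 → ℝ,
      u₁ ⨯₃ u₂ = v₂ ∧ u₂ ⨯₃ u₃ = v₃ ∧ u₃ ⨯₃ u₄ = v₄ ∧ u₄ ⨯₃ u₁ = v₁ := by
  have hv4 : v₄ = -(v₁ + v₂ + v₃) := by
    funext i
    have h := congrFun hclosed i
    simp only [Pi.add_apply, Pi.zero_apply] at h
    simp only [Pi.neg_apply, Pi.add_apply]
    linarith
  set Δ : ℝ := v₁ ⬝ᵥ (v₂ ⨯₃ v₃) with hΔdef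
  have hΔ : Δ ≠ 0 := hΔ₁
  have hΔexp : Δ = v₁ 0 * (v₂ 1 * v₃ 2 - v₂ 2 * v₃ 1) + v₁ 1 * (v₂ 2 * v₃ 0 - v₂ 0 * v₃ 2) +
      v₁ 2 * (v₂ 0 * v₃ 1 - v₂ 1 * v₃ 0) := by
    simp [hΔdef, dotProduct, crossProduct, Fin.sum_univ_three]
  have k1 : (v₁ ⨯₃ v₂) ⨯₃ (v₂ ⨯₃ v₃) = Δ • v₂ := by
    funext i; fin_cases i <;>
      · simp [crossProduct, hΔexp]
        ring
  have k2 : (v₂ ⨯₃ v₃) ⨯₃ (-(v₃ ⨯₃ v₄)) = Δ • v₃ := by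
    subst hv4
    funext i; fin_cases i <;>
      · simp [crossProduct, hΔexp]
        ring
  have k3 : (-(v₃ ⨯₃ v₄)) ⨯₃ (-(v₄ ⨯₃ v₁)) = Δ • v₄ := by
    subst hv4
    funext i; fin_cases i <;>
      · simp [crossProduct, hΔexp]
        ring
  have k4 : (-(v₄ ⨯₃ v₁)) ⨯₃ (v₁ ⨯₃ v₂) = Δ • v₁ := by
    subst hv4
    funext i; fin_cases i <;>
      · simp [crossProduct, hΔexp]
        ring
  refine ⟨v₁ ⨯₃ v₂, Δ⁻¹ • (v₂ ⨯₃ v₃), -(v₃ ⨯₃ v₄), Δ⁻¹ • (-(v₄ ⨯₃ v₁)), ?_, ?_, ?_, ?_⟩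
  · rw [_root_.map_smul, k1, smul_smul, inv_mul_cancel₀ hΔ, one_smul]
  · rw [_root_.map_smul, LinearMap.smul_apply, k2, smul_smul, inv_mul_cancel₀ hΔ, one_smul]
  · rw [_root_.map_smul, k3, smul_smul, inv_mul_cancel₀ hΔ, one_smul]
  · rw [_root_.map_smul, LinearMap.smul_apply, k4, smul_smul, inv_mul_cancel₀ hΔ, one_smul]
end

section
/- Let v_1, v_2, v_3, v_4 ∈ ℝ³ be the edge vectors of a generic closed quadrangle (v_1+v_2+v_3+v_4 = 0, all Δ_i ≠ 0), and let u_1, u_2, u_3, u_4 be any support system for it. Then ⟨u_2 − u_1, [u_3 − u_1, u_4 − u_1]⟩ = 0; that is, the four endpoints of the support vectors (the vertices of the derived polygon) lie in a common plane. -/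
open Matrix

/-- For a generic closed quadrangle with edge vectors `v₁, …, v₄` and any
support system `u₁, …, u₄`, we have `⟨u₂ - u₁, [u₃ - u₁, u₄ - u₁]⟩ = 0`: the endpoints of
the support vectors (the vertices of the derived polygon) lie in a common plane. -/
theorem derived_quadrangle_planar (v₁ v₂ v₃ v₄ : Fin 3 → ℝ)
    (hclosed : v₁ + v₂ + v₃ + v₄ = 0)
    (hΔ₁ : v₁ ⬝ᵥ (v₂ ⨯₃ v₃) ≠ 0)
    (hΔ₂ : v₂ ⬝ᵥ (v₃ ⨯₃ v₄) ≠ 0)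
    (hΔ₃ : v₃ ⬝ᵥ (v₄ ⨯₃ v₁) ≠ 0)
    (hΔ₄ : v₄ ⬝ᵥ (v₁ ⨯₃ v₂) ≠ 0)
    (u₁ u₂ u₃ u₄ : Fin 3 → ℝ)
    (h₁₂ : u₁ ⨯₃ u₂ = v₂) (h₂₃ : u₂ ⨯₃ u₃ = v₃)
    (h₃₄ : u₃ ⨯₃ u₄ = v₄) (h₄₁ : u₄ ⨯₃ u₁ = v₁) :
    (u₂ - u₁) ⬝ᵥ ((u₃ - u₁) ⨯₃ (u₄ - u₁)) = 0 := by
  have hk : u₁ ⨯₃ u₂ + u₂ ⨯₃ u₃ + u₃ ⨯₃ u₄ + u₄ ⨯₃ u₁ = 0 := by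
    rw [h₁₂, h₂₃, h₃₄, h₄₁]
    linear_combination hclosed
  have e0 := congrFun hk 0
  have e1 := congrFun hk 1
  have e2 := congrFun hk 2
  simp [crossProduct] at e0 e1 e2
  simp [crossProduct, dotProduct, Fin.sum_univ_three]
  linear_combination (u₂ 0 - u₁ 0) * e0 + (u₂ 1 - u₁ 1) * e1 + (u₂ 2 - u₁ 2) * e2
end

section
/- Let u_1, u_2, u_3, u_4 ∈ ℝ³ be a support system for a closed quadrangle with edge vectors v_1, v_2, v_3, v_4. Then [u_2 − u_1, u_3 − u_1] + [u_3 − u_1, u_4 − u_1] = 0; that is, the vector-valued oriented area of the derived quadrangle with vertices u_1, u_2, u_3, u_4 is zero (so the derived quadrangle is self-intersecting). -/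
open Matrix

/-- For any support system `u₁, …, u₄` of a closed quadrangle with edge
vectors `v₁, …, v₄`, one has `[u₂ - u₁, u₃ - u₁] + [u₃ - u₁, u₄ - u₁] = 0`: the
vector-valued oriented area of the derived quadrangle is zero (so it is
self-intersecting). -/
theorem derived_quadrangle_zero_area (v₁ v₂ v₃ v₄ : Fin 3 → ℝ)
    (hclosed : v₁ + v₂ + v₃ + v₄ = 0)
    (u₁ u₂ u₃ u₄ : Fin 3 → ℝ)
    (h₁₂ : u₁ ⨯₃ u₂ = v₂) (h₂₃ : u₂ ⨯₃ u₃ = v₃)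
    (h₃₄ : u₃ ⨯₃ u₄ = v₄) (h₄₁ : u₄ ⨯₃ u₁ = v₁) :
    (u₂ - u₁) ⨯₃ (u₃ - u₁) + (u₃ - u₁) ⨯₃ (u₄ - u₁) = 0 := by
  subst h₁₂ h₂₃ h₃₄ h₄₁
  funext i
  have h := congrFun hclosed i
  fin_cases i <;> simp [crossProduct] at h ⊢ <;> linear_combination h
end

section
/- Let u_1,…,u_5 ∈ ℝ³ be a support system for a closed pentagon with edge vectors v_1,…,v_5. Then [u_2 − u_1, u_3 − u_1] + [u_3 − u_1, u_4 − u_1] + [u_4 − u_1, u_5 − u_1] = 0; that is, the vector-valued oriented area of the derived pentagon with vertices u_1,…,u_5 is zero. -/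
open Matrix

/-- For any support system `u₁, …, u₅` of a closed pentagon with edge
vectors `v₁, …, v₅`, one has
`[u₂ - u₁, u₃ - u₁] + [u₃ - u₁, u₄ - u₁] + [u₄ - u₁, u₅ - u₁] = 0`: the vector-valued
oriented area of the derived pentagon is zero. -/
theorem derived_pentagon_zero_area (v₁ v₂ v₃ v₄ v₅ : Fin 3 → ℝ)
    (hclosed : v₁ + v₂ + v₃ + v₄ + v₅ = 0)
    (u₁ u₂ u₃ u₄ u₅ : Fin 3 → ℝ)
    (h₁₂ : u₁ ⨯₃ u₂ = v₂) (h₂₃ : u₂ ⨯₃ u₃ = v₃) (h₃₄ : u₃ ⨯₃ u₄ = v₄)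
    (h₄₅ : u₄ ⨯₃ u₅ = v₅) (h₅₁ : u₅ ⨯₃ u₁ = v₁) :
    (u₂ - u₁) ⨯₃ (u₃ - u₁) + (u₃ - u₁) ⨯₃ (u₄ - u₁) + (u₄ - u₁) ⨯₃ (u₅ - u₁) = 0 := by
  subst h₁₂ h₂₃ h₃₄ h₄₅ h₅₁
  funext i
  have h := congrFun hclosed i
  fin_cases i <;>
    simp [crossProduct, Pi.add_apply, Pi.sub_apply] at h ⊢ <;> ring_nf <;> ring_nf at h <;> linarith
end

section
/- Let v_1,…,v_6 ∈ ℝ³ be the edge vectors of a generic closed hexagon (v_1+⋯+v_6 = 0, all Δ_i ≠ 0) that is regular, and let u_1,…,u_6 be any support system. Let w_i = u_{i+1} − u_i (indices mod 6, so w_6 = u_1 − u_6) be the edge vectors of the derived hexagon, and let Δ'_i = ⟨w_i, [w_{i+1}, w_{i+2}]⟩ (indices mod 6). Then Δ'_1 = Δ'_4, Δ'_2 = Δ'_5 and Δ'_3 = Δ'_6; that is, every derivative of a regular hexagon is strongly-regular. -/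
open Matrix

/-- Let `v₁, …, v₆` be the edge vectors of a generic closed hexagon that
is regular, with support system `u₁, …, u₆`.  Let `wᵢ = u_{i+1} - uᵢ` (indices mod 6) be
the edge vectors of the derived hexagon and `Δ'ᵢ = ⟨wᵢ, [w_{i+1}, w_{i+2}]⟩`.  Then
`Δ'₁ = Δ'₄`, `Δ'₂ = Δ'₅` and `Δ'₃ = Δ'₆`: every derivative of a regular hexagon is
strongly-regular. -/
theorem derived_hexagon_strongly_regular (v₁ v₂ v₃ v₄ v₅ v₆ : Fin 3 → ℝ)
    (hclosed : v₁ + v₂ + v₃ + v₄ + v₅ + v₆ = 0)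
    (hΔ₁ : v₁ ⬝ᵥ (v₂ ⨯₃ v₃) ≠ 0)
    (hΔ₂ : v₂ ⬝ᵥ (v₃ ⨯₃ v₄) ≠ 0)
    (hΔ₃ : v₃ ⬝ᵥ (v₄ ⨯₃ v₅) ≠ 0)
    (hΔ₄ : v₄ ⬝ᵥ (v₅ ⨯₃ v₆) ≠ 0)
    (hΔ₅ : v₅ ⬝ᵥ (v₆ ⨯₃ v₁) ≠ 0)
    (hΔ₆ : v₆ ⬝ᵥ (v₁ ⨯₃ v₂) ≠ 0)
    (u₁ u₂ u₃ u₄ u₅ u₆ : Fin 3 → ℝ)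
    (h₁₂ : u₁ ⨯₃ u₂ = v₂) (h₂₃ : u₂ ⨯₃ u₃ = v₃) (h₃₄ : u₃ ⨯₃ u₄ = v₄)
    (h₄₅ : u₄ ⨯₃ u₅ = v₅) (h₅₆ : u₅ ⨯₃ u₆ = v₆) (h₆₁ : u₆ ⨯₃ u₁ = v₁)
    (w₁ w₂ w₃ w₄ w₅ w₆ : Fin 3 → ℝ)
    (hw₁ : w₁ = u₂ - u₁) (hw₂ : w₂ = u₃ - u₂) (hw₃ : w₃ = u₄ - u₃)
    (hw₄ : w₄ = u₅ - u₄) (hw₅ : w₅ = u₆ - u₅) (hw₆ : w₆ = u₁ - u₆)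
    (Δ'₁ Δ'₂ Δ'₃ Δ'₄ Δ'₅ Δ'₆ : ℝ)
    (hΔ'₁ : Δ'₁ = w₁ ⬝ᵥ (w₂ ⨯₃ w₃))
    (hΔ'₂ : Δ'₂ = w₂ ⬝ᵥ (w₃ ⨯₃ w₄))
    (hΔ'₃ : Δ'₃ = w₃ ⬝ᵥ (w₄ ⨯₃ w₅))
    (hΔ'₄ : Δ'₄ = w₄ ⬝ᵥ (w₅ ⨯₃ w₆))
    (hΔ'₅ : Δ'₅ = w₅ ⬝ᵥ (w₆ ⨯₃ w₁))
    (hΔ'₆ : Δ'₆ = w₆ ⬝ᵥ (w₁ ⨯₃ w₂)) :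
    Δ'₁ = Δ'₄ ∧ Δ'₂ = Δ'₅ ∧ Δ'₃ = Δ'₆ := by
  subst hw₁ hw₂ hw₃ hw₄ hw₅ hw₆ hΔ'₁ hΔ'₂ hΔ'₃ hΔ'₄ hΔ'₅ hΔ'₆
  subst h₁₂ h₂₃ h₃₄ h₄₅ h₅₆ h₆₁
  have e0 := congrFun hclosed 0
  have e1 := congrFun hclosed 1
  have e2 := congrFun hclosed 2
  simp only [cross_apply, Pi.add_apply, Pi.zero_apply, cons_val_zero, cons_val_one,
    head_cons, cons_val_two, tail_cons] at e0 e1 e2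
  refine ⟨?_, ?_, ?_⟩
  · simp only [dotProduct, Fin.sum_univ_three, cross_apply, Pi.sub_apply, cons_val_zero,
      cons_val_one, head_cons, cons_val_two, tail_cons]
    linear_combination (u₄ 0 - u₁ 0) * e0 + (u₄ 1 - u₁ 1) * e1 + (u₄ 2 - u₁ 2) * e2
  · simp only [dotProduct, Fin.sum_univ_three, cross_apply, Pi.sub_apply, cons_val_zero,
      cons_val_one, head_cons, cons_val_two, tail_cons]
    linear_combination (u₅ 0 - u₂ 0) * e0 + (u₅ 1 - u₂ 1) * e1 + (u₅ 2 - u₂ 2) * e2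
  · simp only [dotProduct, Fin.sum_univ_three, cross_apply, Pi.sub_apply, cons_val_zero,
      cons_val_one, head_cons, cons_val_two, tail_cons]
    linear_combination (u₆ 0 - u₃ 0) * e0 + (u₆ 1 - u₃ 1) * e1 + (u₆ 2 - u₃ 2) * e2
end

section
/- Let v_1,…,v_6 ∈ ℝ³ be the edge vectors of a generic closed hexagon and let u_1,…,u_6 be a support system. For each nonzero real α, define the support system u'_i(α) by u'_i(α) = α·u_i for even i and u'_i(α) = u_i/α for odd i, let w_i(α) = u'_{i+1}(α) − u'_i(α) (indices mod 6), and Δ'_i(α) = ⟨w_i(α), [w_{i+1}(α), w_{i+2}(α)]⟩. Then for all nonzero α, β: Δ'_1(α)·Δ'_2(β) = Δ'_2(α)·Δ'_1(β) and Δ'_2(α)·Δ'_3(β) = Δ'_3(α)·Δ'_2(β); that is, the type Δ'_1 : Δ'_2 : Δ'_3 of the derived hexagon is the same for all derivatives of the regular hexagon. -/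
open Matrix

set_option maxHeartbeats 2000000 in
/-- Let `u₁, …, u₆` be a support system for a generic closed hexagon with
edge vectors `v₁, …, v₆`.  For nonzero `α`, the rescaled support system is
`u'ᵢ(α) = α • uᵢ` for even `i` and `u'ᵢ(α) = α⁻¹ • uᵢ` for odd `i`; its derived hexagon
has edge vectors `wᵢ(α) = u'_{i+1}(α) - u'ᵢ(α)` (indices mod 6) and determinants
`Δ'ᵢ(α) = ⟨wᵢ(α), [w_{i+1}(α), w_{i+2}(α)]⟩`.  Then for all nonzero `α, β` we have
`Δ'₁(α)·Δ'₂(β) = Δ'₂(α)·Δ'₁(β)` and `Δ'₂(α)·Δ'₃(β) = Δ'₃(α)·Δ'₂(β)`: the type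
`Δ'₁ : Δ'₂ : Δ'₃` is the same for all derivatives of the hexagon. -/
theorem derived_hexagon_type_independent (v₁ v₂ v₃ v₄ v₅ v₆ : Fin 3 → ℝ)
    (hclosed : v₁ + v₂ + v₃ + v₄ + v₅ + v₆ = 0)
    (hΔ₁ : v₁ ⬝ᵥ (v₂ ⨯₃ v₃) ≠ 0)
    (hΔ₂ : v₂ ⬝ᵥ (v₃ ⨯₃ v₄) ≠ 0)
    (hΔ₃ : v₃ ⬝ᵥ (v₄ ⨯₃ v₅) ≠ 0)
    (hΔ₄ : v₄ ⬝ᵥ (v₅ ⨯₃ v₆) ≠ 0)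
    (hΔ₅ : v₅ ⬝ᵥ (v₆ ⨯₃ v₁) ≠ 0)
    (hΔ₆ : v₆ ⬝ᵥ (v₁ ⨯₃ v₂) ≠ 0)
    (u₁ u₂ u₃ u₄ u₅ u₆ : Fin 3 → ℝ)
    (h₁₂ : u₁ ⨯₃ u₂ = v₂) (h₂₃ : u₂ ⨯₃ u₃ = v₃) (h₃₄ : u₃ ⨯₃ u₄ = v₄)
    (h₄₅ : u₄ ⨯₃ u₅ = v₅) (h₅₆ : u₅ ⨯₃ u₆ = v₆) (h₆₁ : u₆ ⨯₃ u₁ = v₁)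
    (w₁ w₂ w₃ w₄ w₅ w₆ : ℝ → Fin 3 → ℝ)
    (hw₁ : ∀ α : ℝ, w₁ α = α • u₂ - α⁻¹ • u₁)
    (hw₂ : ∀ α : ℝ, w₂ α = α⁻¹ • u₃ - α • u₂)
    (hw₃ : ∀ α : ℝ, w₃ α = α • u₄ - α⁻¹ • u₃)
    (hw₄ : ∀ α : ℝ, w₄ α = α⁻¹ • u₅ - α • u₄)
    (hw₅ : ∀ α : ℝ, w₅ α = α • u₆ - α⁻¹ • u₅)
    (hw₆ : ∀ α : ℝ, w₆ α = α⁻¹ • u₁ - α • u₆)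
    (Δ'₁ Δ'₂ Δ'₃ : ℝ → ℝ)
    (hΔ'₁ : ∀ α : ℝ, Δ'₁ α = w₁ α ⬝ᵥ (w₂ α ⨯₃ w₃ α))
    (hΔ'₂ : ∀ α : ℝ, Δ'₂ α = w₂ α ⬝ᵥ (w₃ α ⨯₃ w₄ α))
    (hΔ'₃ : ∀ α : ℝ, Δ'₃ α = w₃ α ⬝ᵥ (w₄ α ⨯₃ w₅ α)) :
    ∀ α β : ℝ, α ≠ 0 → β ≠ 0 →
      Δ'₁ α * Δ'₂ β = Δ'₂ α * Δ'₁ β ∧ Δ'₂ α * Δ'₃ β = Δ'₃ α * Δ'₂ β := by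
  intro α β hα hβ
  have hS : ((u₁ ⨯₃ u₂) + (u₂ ⨯₃ u₃) + (u₃ ⨯₃ u₄) + (u₄ ⨯₃ u₅) + (u₅ ⨯₃ u₆) + (u₆ ⨯₃ u₁)) = 0 := by
    rw [h₁₂, h₂₃, h₃₄, h₄₅, h₅₆, h₆₁]
    linear_combination hclosed
  have hf1 : ∀ γ : ℝ, γ ≠ 0 → Δ'₁ γ = γ * (u₂ ⬝ᵥ (u₃ ⨯₃ u₄) + u₁ ⬝ᵥ (u₂ ⨯₃ u₄)) + γ⁻¹ * (-(u₁ ⬝ᵥ (u₃ ⨯₃ u₄)) - u₁ ⬝ᵥ (u₂ ⨯₃ u₃)) := by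
    intro γ hγ
    rw [hΔ'₁, hw₁, hw₂, hw₃]
    simp only [cross_apply, dotProduct, Fin.sum_univ_three, Pi.sub_apply, Pi.add_apply,
      Pi.smul_apply, smul_eq_mul, Matrix.cons_val_zero, Matrix.cons_val_one, Matrix.head_cons,
      Matrix.cons_val_two, Matrix.tail_cons]
    field_simp
    ring
  have hf2 : ∀ γ : ℝ, γ ≠ 0 → Δ'₂ γ = γ * (-(u₂ ⬝ᵥ (u₄ ⨯₃ u₅)) - u₂ ⬝ᵥ (u₃ ⨯₃ u₄)) + γ⁻¹ * (u₃ ⬝ᵥ (u₄ ⨯₃ u₅) + u₂ ⬝ᵥ (u₃ ⨯₃ u₅)) := by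
    intro γ hγ
    rw [hΔ'₂, hw₂, hw₃, hw₄]
    simp only [cross_apply, dotProduct, Fin.sum_univ_three, Pi.sub_apply, Pi.add_apply,
      Pi.smul_apply, smul_eq_mul, Matrix.cons_val_zero, Matrix.cons_val_one, Matrix.head_cons,
      Matrix.cons_val_two, Matrix.tail_cons]
    field_simp
    ring
  have hf3 : ∀ γ : ℝ, γ ≠ 0 → Δ'₃ γ = γ * (u₄ ⬝ᵥ (u₅ ⨯₃ u₆) + u₃ ⬝ᵥ (u₄ ⨯₃ u₆)) + γ⁻¹ * (-(u₃ ⬝ᵥ (u₅ ⨯₃ u₆)) - u₃ ⬝ᵥ (u₄ ⨯₃ u₅)) := by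
    intro γ hγ
    rw [hΔ'₃, hw₃, hw₄, hw₅]
    simp only [cross_apply, dotProduct, Fin.sum_univ_three, Pi.sub_apply, Pi.add_apply,
      Pi.smul_apply, smul_eq_mul, Matrix.cons_val_zero, Matrix.cons_val_one, Matrix.head_cons,
      Matrix.cons_val_two, Matrix.tail_cons]
    field_simp
    ring
  have key12 : (u₂ ⬝ᵥ (u₃ ⨯₃ u₄) + u₁ ⬝ᵥ (u₂ ⨯₃ u₄)) * (u₃ ⬝ᵥ (u₄ ⨯₃ u₅) + u₂ ⬝ᵥ (u₃ ⨯₃ u₅)) - (-(u₂ ⬝ᵥ (u₄ ⨯₃ u₅)) - u₂ ⬝ᵥ (u₃ ⨯₃ u₄)) * (-(u₁ ⬝ᵥ (u₃ ⨯₃ u₄)) - u₁ ⬝ᵥ (u₂ ⨯₃ u₃)) = 0 := by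
    have h0 : (((u₁ ⨯₃ u₂) ⨯₃ (u₃ ⨯₃ u₄)) - ((u₁ ⨯₃ u₃) ⨯₃ (u₂ ⨯₃ u₄))
        + ((u₁ ⨯₃ u₄) ⨯₃ (u₂ ⨯₃ u₃)) - ((u₂ ⨯₃ u₃) ⨯₃ (u₄ ⨯₃ u₅))
        + ((u₂ ⨯₃ u₄) ⨯₃ (u₃ ⨯₃ u₅)) + ((u₂ ⨯₃ u₅) ⨯₃ (u₃ ⨯₃ u₄))) ⬝ᵥ ((u₁ ⨯₃ u₂) + (u₂ ⨯₃ u₃) + (u₃ ⨯₃ u₄) + (u₄ ⨯₃ u₅) + (u₅ ⨯₃ u₆) + (u₆ ⨯₃ u₁)) = 0 := by rw [hS, dotProduct_zero]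
    simp only [cross_apply, dotProduct, Fin.sum_univ_three, Pi.sub_apply, Pi.add_apply,
      Pi.smul_apply, smul_eq_mul, Matrix.cons_val_zero, Matrix.cons_val_one, Matrix.head_cons,
      Matrix.cons_val_two, Matrix.tail_cons] at h0 ⊢
    linear_combination h0 / 2
  have key23 : (-(u₂ ⬝ᵥ (u₄ ⨯₃ u₅)) - u₂ ⬝ᵥ (u₃ ⨯₃ u₄)) * (-(u₃ ⬝ᵥ (u₅ ⨯₃ u₆)) - u₃ ⬝ᵥ (u₄ ⨯₃ u₅)) - (u₄ ⬝ᵥ (u₅ ⨯₃ u₆) + u₃ ⬝ᵥ (u₄ ⨯₃ u₆)) * (u₃ ⬝ᵥ (u₄ ⨯₃ u₅) + u₂ ⬝ᵥ (u₃ ⨯₃ u₅)) = 0 := by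
    have h0 : (((u₁ ⨯₃ u₂) ⨯₃ (u₃ ⨯₃ u₄)) - ((u₁ ⨯₃ u₆) ⨯₃ (u₃ ⨯₃ u₄))
        + ((u₂ ⨯₃ u₃) ⨯₃ (u₃ ⨯₃ u₄)) - ((u₂ ⨯₃ u₃) ⨯₃ (u₄ ⨯₃ u₅))
        + ((u₂ ⨯₃ u₄) ⨯₃ (u₃ ⨯₃ u₅)) - ((u₂ ⨯₃ u₅) ⨯₃ (u₃ ⨯₃ u₄))
        - ((u₃ ⨯₃ u₄) ⨯₃ (u₄ ⨯₃ u₅)) - ((u₃ ⨯₃ u₅) ⨯₃ (u₄ ⨯₃ u₆))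
        - ((u₃ ⨯₃ u₆) ⨯₃ (u₄ ⨯₃ u₅))) ⬝ᵥ ((u₁ ⨯₃ u₂) + (u₂ ⨯₃ u₃) + (u₃ ⨯₃ u₄) + (u₄ ⨯₃ u₅) + (u₅ ⨯₃ u₆) + (u₆ ⨯₃ u₁)) = 0 := by rw [hS, dotProduct_zero]
    simp only [cross_apply, dotProduct, Fin.sum_univ_three, Pi.sub_apply, Pi.add_apply,
      Pi.smul_apply, smul_eq_mul, Matrix.cons_val_zero, Matrix.cons_val_one, Matrix.head_cons,
      Matrix.cons_val_two, Matrix.tail_cons] at h0 ⊢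
    linear_combination h0 / 2
  rw [hf1 α hα, hf1 β hβ, hf2 α hα, hf2 β hβ, hf3 α hα, hf3 β hβ]
  constructor
  · linear_combination (α * β⁻¹ - α⁻¹ * β) * key12
  · linear_combination (α * β⁻¹ - α⁻¹ * β) * key23
end

section
/- Let v_1,…,v_6 ∈ ℝ³ be the edge vectors of a generic regular closed hexagon P with support system u_1,…,u_6; let w_i = u_{i+1} − u_i (indices mod 6) be the edge vectors of the derived hexagon P', with determinants Δ'_i = ⟨w_i,[w_{i+1},w_{i+2}]⟩, and assume P' is generic with support system t_1,…,t_6. Let s_i = t_{i+1} − t_i (indices mod 6) be the edge vectors of the second derivative P'', with determinants Δ''_i = ⟨s_i,[s_{i+1},s_{i+2}]⟩. Then Δ''_1·Δ'_3 = Δ''_2·Δ'_2, Δ''_2·Δ'_1 = Δ''_3·Δ'_3 and Δ''_3·Δ'_2 = Δ''_1·Δ'_1; that is, the types (cyclic ratios Δ_1 : Δ_2 : Δ_3) of P' and P'' coincide. -/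
open Matrix


private lemma L1 (a b c d : Fin 3 → ℝ) :
    (a ⨯₃ b) ⬝ᵥ ((b ⨯₃ c) ⨯₃ (c ⨯₃ d)) = (a ⬝ᵥ (b ⨯₃ c)) * (b ⬝ᵥ (c ⨯₃ d)) := by
  simp [cross_apply, dotProduct, Fin.sum_univ_three]; ring

private lemma L4 (a b c d e : Fin 3 → ℝ) :
    (a ⨯₃ b) ⬝ᵥ ((c ⨯₃ d) ⨯₃ (d ⨯₃ e)) = (c ⬝ᵥ (d ⨯₃ e)) * (a ⬝ᵥ (b ⨯₃ d)) := by
  simp [cross_apply, dotProduct, Fin.sum_univ_three]; ring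

private lemma L5 (a b c d e : Fin 3 → ℝ) :
    (a ⨯₃ b) ⬝ᵥ ((b ⨯₃ c) ⨯₃ (d ⨯₃ e)) = (a ⬝ᵥ (b ⨯₃ c)) * (b ⬝ᵥ (d ⨯₃ e)) := by
  simp [cross_apply, dotProduct, Fin.sum_univ_three]; ring

private lemma L2 (a b c d : Fin 3 → ℝ) :
    (b - a) ⬝ᵥ ((c - b) ⨯₃ (d - c))
      = b ⬝ᵥ (c ⨯₃ d) - a ⬝ᵥ (c ⨯₃ d) + a ⬝ᵥ (b ⨯₃ d) - a ⬝ᵥ (b ⨯₃ c) := by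
  simp [cross_apply, dotProduct, Fin.sum_univ_three]; ring

private lemma LJ1 (a b c d e f : Fin 3 → ℝ) :
    (d - c) ⬝ᵥ ((e - d) ⨯₃ (f - e)) + (c - b) ⬝ᵥ ((e - d) ⨯₃ (f - e))
      + (c - b) ⬝ᵥ ((d - c) ⨯₃ (e - d)) + (c - b) ⬝ᵥ ((d - c) ⨯₃ (f - e))
    = (f - b) ⬝ᵥ (f ⨯₃ a + a ⨯₃ b + b ⨯₃ c + c ⨯₃ d + d ⨯₃ e + e ⨯₃ f) := by
  simp [cross_apply, dotProduct, Fin.sum_univ_three]; ring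

private lemma LJ2 (a b c d e f : Fin 3 → ℝ) :
    (b - a) ⬝ᵥ ((c - b) ⨯₃ (d - c)) + (b - a) ⬝ᵥ ((c - b) ⨯₃ (e - d))
      + (e - d) ⬝ᵥ ((f - e) ⨯₃ (a - f)) + (d - c) ⬝ᵥ ((f - e) ⨯₃ (a - f))
    = (e - c) ⬝ᵥ (f ⨯₃ a + a ⨯₃ b + b ⨯₃ c + c ⨯₃ d + d ⨯₃ e + e ⨯₃ f) := by
  simp [cross_apply, dotProduct, Fin.sum_univ_three]; ring

private lemma LJ3 (a b c d e f : Fin 3 → ℝ) :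
    (b - a) ⬝ᵥ ((c - b) ⨯₃ (d - c)) - (e - d) ⬝ᵥ ((f - e) ⨯₃ (a - f))
    = (d - a) ⬝ᵥ (f ⨯₃ a + a ⨯₃ b + b ⨯₃ c + c ⨯₃ d + d ⨯₃ e + e ⨯₃ f) := by
  simp [cross_apply, dotProduct, Fin.sum_univ_three]; ring

private lemma LJ4 (a b c d e f : Fin 3 → ℝ) :
    (e - d) ⬝ᵥ ((f - e) ⨯₃ (a - f)) + (d - c) ⬝ᵥ ((f - e) ⨯₃ (a - f))
      + (d - c) ⬝ᵥ ((e - d) ⨯₃ (f - e)) + (d - c) ⬝ᵥ ((e - d) ⨯₃ (a - f))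
    = (a - c) ⬝ᵥ (f ⨯₃ a + a ⨯₃ b + b ⨯₃ c + c ⨯₃ d + d ⨯₃ e + e ⨯₃ f) := by
  simp [cross_apply, dotProduct, Fin.sum_univ_three]; ring

private lemma LJ5 (a b c d e f : Fin 3 → ℝ) :
    (c - b) ⬝ᵥ ((d - c) ⨯₃ (e - d)) + (c - b) ⬝ᵥ ((d - c) ⨯₃ (f - e))
      + (f - e) ⬝ᵥ ((a - f) ⨯₃ (b - a)) + (e - d) ⬝ᵥ ((a - f) ⨯₃ (b - a))
    = (f - d) ⬝ᵥ (f ⨯₃ a + a ⨯₃ b + b ⨯₃ c + c ⨯₃ d + d ⨯₃ e + e ⨯₃ f) := by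
  simp [cross_apply, dotProduct, Fin.sum_univ_three]; ring

private lemma LJ6 (a b c d e f : Fin 3 → ℝ) :
    (c - b) ⬝ᵥ ((d - c) ⨯₃ (e - d)) - (f - e) ⬝ᵥ ((a - f) ⨯₃ (b - a))
    = (e - b) ⬝ᵥ (f ⨯₃ a + a ⨯₃ b + b ⨯₃ c + c ⨯₃ d + d ⨯₃ e + e ⨯₃ f) := by
  simp [cross_apply, dotProduct, Fin.sum_univ_three]; ring

/-- Let `P` be a generic regular closed hexagon with edge vectors
`v₁, …, v₆` and support system `u₁, …, u₆`; let `wᵢ = u_{i+1} - uᵢ` (indices mod 6) be the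
edge vectors of the derived hexagon `P'`, with determinants `Δ'ᵢ`.  Assume `P'` is generic
with support system `t₁, …, t₆` and let `sᵢ = t_{i+1} - tᵢ` be the edge vectors of the
second derivative `P''`, with determinants `Δ''ᵢ`.  Then `Δ''₁·Δ'₃ = Δ''₂·Δ'₂`,
`Δ''₂·Δ'₁ = Δ''₃·Δ'₃` and `Δ''₃·Δ'₂ = Δ''₁·Δ'₁`: the types of `P'` and `P''` coincide. -/
theorem second_derived_hexagon_same_type (v₁ v₂ v₃ v₄ v₅ v₆ : Fin 3 → ℝ)
    (hclosed : v₁ + v₂ + v₃ + v₄ + v₅ + v₆ = 0)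
    (hΔ₁ : v₁ ⬝ᵥ (v₂ ⨯₃ v₃) ≠ 0)
    (hΔ₂ : v₂ ⬝ᵥ (v₃ ⨯₃ v₄) ≠ 0)
    (hΔ₃ : v₃ ⬝ᵥ (v₄ ⨯₃ v₅) ≠ 0)
    (hΔ₄ : v₄ ⬝ᵥ (v₅ ⨯₃ v₆) ≠ 0)
    (hΔ₅ : v₅ ⬝ᵥ (v₆ ⨯₃ v₁) ≠ 0)
    (hΔ₆ : v₆ ⬝ᵥ (v₁ ⨯₃ v₂) ≠ 0)
    (u₁ u₂ u₃ u₄ u₅ u₆ : Fin 3 → ℝ)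
    (h₁₂ : u₁ ⨯₃ u₂ = v₂) (h₂₃ : u₂ ⨯₃ u₃ = v₃) (h₃₄ : u₃ ⨯₃ u₄ = v₄)
    (h₄₅ : u₄ ⨯₃ u₅ = v₅) (h₅₆ : u₅ ⨯₃ u₆ = v₆) (h₆₁ : u₆ ⨯₃ u₁ = v₁)
    (w₁ w₂ w₃ w₄ w₅ w₆ : Fin 3 → ℝ)
    (hw₁ : w₁ = u₂ - u₁) (hw₂ : w₂ = u₃ - u₂) (hw₃ : w₃ = u₄ - u₃)
    (hw₄ : w₄ = u₅ - u₄) (hw₅ : w₅ = u₆ - u₅) (hw₆ : w₆ = u₁ - u₆)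
    (Δ'₁ Δ'₂ Δ'₃ Δ'₄ Δ'₅ Δ'₆ : ℝ)
    (hΔ'₁ : Δ'₁ = w₁ ⬝ᵥ (w₂ ⨯₃ w₃))
    (hΔ'₂ : Δ'₂ = w₂ ⬝ᵥ (w₃ ⨯₃ w₄))
    (hΔ'₃ : Δ'₃ = w₃ ⬝ᵥ (w₄ ⨯₃ w₅))
    (hΔ'₄ : Δ'₄ = w₄ ⬝ᵥ (w₅ ⨯₃ w₆))
    (hΔ'₅ : Δ'₅ = w₅ ⬝ᵥ (w₆ ⨯₃ w₁))
    (hΔ'₆ : Δ'₆ = w₆ ⬝ᵥ (w₁ ⨯₃ w₂))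
    (hgen' : Δ'₁ ≠ 0 ∧ Δ'₂ ≠ 0 ∧ Δ'₃ ≠ 0 ∧ Δ'₄ ≠ 0 ∧ Δ'₅ ≠ 0 ∧ Δ'₆ ≠ 0)
    (t₁ t₂ t₃ t₄ t₅ t₆ : Fin 3 → ℝ)
    (ht₁₂ : t₁ ⨯₃ t₂ = w₂) (ht₂₃ : t₂ ⨯₃ t₃ = w₃) (ht₃₄ : t₃ ⨯₃ t₄ = w₄)
    (ht₄₅ : t₄ ⨯₃ t₅ = w₅) (ht₅₆ : t₅ ⨯₃ t₆ = w₆) (ht₆₁ : t₆ ⨯₃ t₁ = w₁)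
    (s₁ s₂ s₃ s₄ s₅ s₆ : Fin 3 → ℝ)
    (hs₁ : s₁ = t₂ - t₁) (hs₂ : s₂ = t₃ - t₂) (hs₃ : s₃ = t₄ - t₃)
    (hs₄ : s₄ = t₅ - t₄) (hs₅ : s₅ = t₆ - t₅) (hs₆ : s₆ = t₁ - t₆)
    (Δ''₁ Δ''₂ Δ''₃ : ℝ)
    (hΔ''₁ : Δ''₁ = s₁ ⬝ᵥ (s₂ ⨯₃ s₃))
    (hΔ''₂ : Δ''₂ = s₂ ⬝ᵥ (s₃ ⨯₃ s₄))
    (hΔ''₃ : Δ''₃ = s₃ ⬝ᵥ (s₄ ⨯₃ s₅)) :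
    Δ''₁ * Δ'₃ = Δ''₂ * Δ'₂ ∧ Δ''₂ * Δ'₁ = Δ''₃ * Δ'₃ ∧ Δ''₃ * Δ'₂ = Δ''₁ * Δ'₁ := by
  obtain ⟨hg1, hg2, hg3, hg4, hg5, hg6⟩ := hgen'
  -- t-forms of the determinants of w-triples
  have hT123 : w₁ ⬝ᵥ (w₂ ⨯₃ w₃) = (t₆ ⬝ᵥ (t₁ ⨯₃ t₂)) * (t₁ ⬝ᵥ (t₂ ⨯₃ t₃)) := by
    rw [← ht₆₁, ← ht₁₂, ← ht₂₃]; exact L1 t₆ t₁ t₂ t₃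
  have hT234 : w₂ ⬝ᵥ (w₃ ⨯₃ w₄) = (t₁ ⬝ᵥ (t₂ ⨯₃ t₃)) * (t₂ ⬝ᵥ (t₃ ⨯₃ t₄)) := by
    rw [← ht₁₂, ← ht₂₃, ← ht₃₄]; exact L1 t₁ t₂ t₃ t₄
  have hT345 : w₃ ⬝ᵥ (w₄ ⨯₃ w₅) = (t₂ ⬝ᵥ (t₃ ⨯₃ t₄)) * (t₃ ⬝ᵥ (t₄ ⨯₃ t₅)) := by
    rw [← ht₂₃, ← ht₃₄, ← ht₄₅]; exact L1 t₂ t₃ t₄ t₅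
  have hT456 : w₄ ⬝ᵥ (w₅ ⨯₃ w₆) = (t₃ ⬝ᵥ (t₄ ⨯₃ t₅)) * (t₄ ⬝ᵥ (t₅ ⨯₃ t₆)) := by
    rw [← ht₃₄, ← ht₄₅, ← ht₅₆]; exact L1 t₃ t₄ t₅ t₆
  have hT561 : w₅ ⬝ᵥ (w₆ ⨯₃ w₁) = (t₄ ⬝ᵥ (t₅ ⨯₃ t₆)) * (t₅ ⬝ᵥ (t₆ ⨯₃ t₁)) := by
    rw [← ht₄₅, ← ht₅₆, ← ht₆₁]; exact L1 t₄ t₅ t₆ t₁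
  have hT612 : w₆ ⬝ᵥ (w₁ ⨯₃ w₂) = (t₅ ⬝ᵥ (t₆ ⨯₃ t₁)) * (t₆ ⬝ᵥ (t₁ ⨯₃ t₂)) := by
    rw [← ht₅₆, ← ht₆₁, ← ht₁₂]; exact L1 t₅ t₆ t₁ t₂
  have hT245 : w₂ ⬝ᵥ (w₄ ⨯₃ w₅) = (t₃ ⬝ᵥ (t₄ ⨯₃ t₅)) * (t₁ ⬝ᵥ (t₂ ⨯₃ t₄)) := by
    rw [← ht₁₂, ← ht₃₄, ← ht₄₅]; exact L4 t₁ t₂ t₃ t₄ t₅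
  have hT235 : w₂ ⬝ᵥ (w₃ ⨯₃ w₅) = (t₁ ⬝ᵥ (t₂ ⨯₃ t₃)) * (t₂ ⬝ᵥ (t₄ ⨯₃ t₅)) := by
    rw [← ht₁₂, ← ht₂₃, ← ht₄₅]; exact L5 t₁ t₂ t₃ t₄ t₅
  have hT124 : w₁ ⬝ᵥ (w₂ ⨯₃ w₄) = (t₆ ⬝ᵥ (t₁ ⨯₃ t₂)) * (t₁ ⬝ᵥ (t₃ ⨯₃ t₄)) := by
    rw [← ht₆₁, ← ht₁₂, ← ht₃₄]; exact L5 t₆ t₁ t₂ t₃ t₄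
  have hT356 : w₃ ⬝ᵥ (w₅ ⨯₃ w₆) = (t₄ ⬝ᵥ (t₅ ⨯₃ t₆)) * (t₂ ⬝ᵥ (t₃ ⨯₃ t₅)) := by
    rw [← ht₂₃, ← ht₄₅, ← ht₅₆]; exact L4 t₂ t₃ t₄ t₅ t₆
  have hT346 : w₃ ⬝ᵥ (w₄ ⨯₃ w₆) = (t₂ ⬝ᵥ (t₃ ⨯₃ t₄)) * (t₃ ⬝ᵥ (t₅ ⨯₃ t₆)) := by
    rw [← ht₂₃, ← ht₃₄, ← ht₅₆]; exact L5 t₂ t₃ t₄ t₅ t₆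
  have hT461 : w₄ ⬝ᵥ (w₆ ⨯₃ w₁) = (t₅ ⬝ᵥ (t₆ ⨯₃ t₁)) * (t₃ ⬝ᵥ (t₄ ⨯₃ t₆)) := by
    rw [← ht₃₄, ← ht₅₆, ← ht₆₁]; exact L4 t₃ t₄ t₅ t₆ t₁
  -- Δ' in terms of the t-determinants
  have hP1 := hΔ'₁.trans hT123
  have hP2 := hΔ'₂.trans hT234
  have hP3 := hΔ'₃.trans hT345
  have hP4 := hΔ'₄.trans hT456
  have hP6 := hΔ'₆.trans hT612
  -- Δ'' in terms of the t-determinants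
  have hQ1 : Δ''₁ = t₂ ⬝ᵥ (t₃ ⨯₃ t₄) - t₁ ⬝ᵥ (t₃ ⨯₃ t₄) + t₁ ⬝ᵥ (t₂ ⨯₃ t₄)
      - t₁ ⬝ᵥ (t₂ ⨯₃ t₃) := by
    rw [hΔ''₁, hs₁, hs₂, hs₃]; exact L2 t₁ t₂ t₃ t₄
  have hQ2 : Δ''₂ = t₃ ⬝ᵥ (t₄ ⨯₃ t₅) - t₂ ⬝ᵥ (t₄ ⨯₃ t₅) + t₂ ⬝ᵥ (t₃ ⨯₃ t₅)
      - t₂ ⬝ᵥ (t₃ ⨯₃ t₄) := by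
    rw [hΔ''₂, hs₂, hs₃, hs₄]; exact L2 t₂ t₃ t₄ t₅
  have hQ3 : Δ''₃ = t₄ ⬝ᵥ (t₅ ⨯₃ t₆) - t₃ ⬝ᵥ (t₅ ⨯₃ t₆) + t₃ ⬝ᵥ (t₄ ⨯₃ t₆)
      - t₃ ⬝ᵥ (t₄ ⨯₃ t₅) := by
    rw [hΔ''₃, hs₃, hs₄, hs₅]; exact L2 t₃ t₄ t₅ t₆
  -- the six cubic identities coming from closedness of P
  have hJ1 : w₃ ⬝ᵥ (w₄ ⨯₃ w₅) + w₂ ⬝ᵥ (w₄ ⨯₃ w₅) + w₂ ⬝ᵥ (w₃ ⨯₃ w₄)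
      + w₂ ⬝ᵥ (w₃ ⨯₃ w₅) = 0 := by
    rw [hw₂, hw₃, hw₄, hw₅, LJ1 u₁ u₂ u₃ u₄ u₅ u₆, h₆₁, h₁₂, h₂₃, h₃₄, h₄₅, h₅₆,
      hclosed, dotProduct_zero]
  have hJ2 : w₁ ⬝ᵥ (w₂ ⨯₃ w₃) + w₁ ⬝ᵥ (w₂ ⨯₃ w₄) + w₄ ⬝ᵥ (w₅ ⨯₃ w₆)
      + w₃ ⬝ᵥ (w₅ ⨯₃ w₆) = 0 := by
    rw [hw₁, hw₂, hw₃, hw₄, hw₅, hw₆, LJ2 u₁ u₂ u₃ u₄ u₅ u₆, h₆₁, h₁₂, h₂₃, h₃₄, h₄₅,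
      h₅₆, hclosed, dotProduct_zero]
  have hJ3 : w₁ ⬝ᵥ (w₂ ⨯₃ w₃) - w₄ ⬝ᵥ (w₅ ⨯₃ w₆) = 0 := by
    rw [hw₁, hw₂, hw₃, hw₄, hw₅, hw₆, LJ3 u₁ u₂ u₃ u₄ u₅ u₆, h₆₁, h₁₂, h₂₃, h₃₄, h₄₅,
      h₅₆, hclosed, dotProduct_zero]
  have hJ4 : w₄ ⬝ᵥ (w₅ ⨯₃ w₆) + w₃ ⬝ᵥ (w₅ ⨯₃ w₆) + w₃ ⬝ᵥ (w₄ ⨯₃ w₅)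
      + w₃ ⬝ᵥ (w₄ ⨯₃ w₆) = 0 := by
    rw [hw₃, hw₄, hw₅, hw₆, LJ4 u₁ u₂ u₃ u₄ u₅ u₆, h₆₁, h₁₂, h₂₃, h₃₄, h₄₅, h₅₆,
      hclosed, dotProduct_zero]
  have hJ5 : w₂ ⬝ᵥ (w₃ ⨯₃ w₄) + w₂ ⬝ᵥ (w₃ ⨯₃ w₅) + w₅ ⬝ᵥ (w₆ ⨯₃ w₁)
      + w₄ ⬝ᵥ (w₆ ⨯₃ w₁) = 0 := by
    rw [hw₁, hw₂, hw₃, hw₄, hw₅, hw₆, LJ5 u₁ u₂ u₃ u₄ u₅ u₆, h₆₁, h₁₂, h₂₃, h₃₄, h₄₅,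
      h₅₆, hclosed, dotProduct_zero]
  have hJ6 : w₂ ⬝ᵥ (w₃ ⨯₃ w₄) - w₅ ⬝ᵥ (w₆ ⨯₃ w₁) = 0 := by
    rw [hw₁, hw₂, hw₃, hw₄, hw₅, hw₆, LJ6 u₁ u₂ u₃ u₄ u₅ u₆, h₆₁, h₁₂, h₂₃, h₃₄, h₄₅,
      h₅₆, hclosed, dotProduct_zero]
  -- the same identities in terms of t-determinants
  have hK1 : (t₃ ⬝ᵥ (t₄ ⨯₃ t₅)) * (t₂ ⬝ᵥ (t₃ ⨯₃ t₄) + t₁ ⬝ᵥ (t₂ ⨯₃ t₄))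
      + (t₁ ⬝ᵥ (t₂ ⨯₃ t₃)) * (t₂ ⬝ᵥ (t₃ ⨯₃ t₄) + t₂ ⬝ᵥ (t₄ ⨯₃ t₅)) = 0 := by
    linear_combination hJ1 - hT345 - hT245 - hT234 - hT235
  have hK2 : (t₆ ⬝ᵥ (t₁ ⨯₃ t₂)) * (t₁ ⬝ᵥ (t₂ ⨯₃ t₃) + t₁ ⬝ᵥ (t₃ ⨯₃ t₄))
      + (t₄ ⬝ᵥ (t₅ ⨯₃ t₆)) * (t₃ ⬝ᵥ (t₄ ⨯₃ t₅) + t₂ ⬝ᵥ (t₃ ⨯₃ t₅)) = 0 := by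
    linear_combination hJ2 - hT123 - hT124 - hT456 - hT356
  have hK3 : (t₆ ⬝ᵥ (t₁ ⨯₃ t₂)) * (t₁ ⬝ᵥ (t₂ ⨯₃ t₃))
      = (t₃ ⬝ᵥ (t₄ ⨯₃ t₅)) * (t₄ ⬝ᵥ (t₅ ⨯₃ t₆)) := by
    linear_combination hJ3 - hT123 + hT456
  have hK4 : (t₄ ⬝ᵥ (t₅ ⨯₃ t₆)) * (t₃ ⬝ᵥ (t₄ ⨯₃ t₅) + t₂ ⬝ᵥ (t₃ ⨯₃ t₅))
      + (t₂ ⬝ᵥ (t₃ ⨯₃ t₄)) * (t₃ ⬝ᵥ (t₄ ⨯₃ t₅) + t₃ ⬝ᵥ (t₅ ⨯₃ t₆)) = 0 := by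
    linear_combination hJ4 - hT456 - hT356 - hT345 - hT346
  have hK5 : (t₁ ⬝ᵥ (t₂ ⨯₃ t₃)) * (t₂ ⬝ᵥ (t₃ ⨯₃ t₄) + t₂ ⬝ᵥ (t₄ ⨯₃ t₅))
      + (t₅ ⬝ᵥ (t₆ ⨯₃ t₁)) * (t₄ ⬝ᵥ (t₅ ⨯₃ t₆) + t₃ ⬝ᵥ (t₄ ⨯₃ t₆)) = 0 := by
    linear_combination hJ5 - hT234 - hT235 - hT561 - hT461
  have hK6 : (t₁ ⬝ᵥ (t₂ ⨯₃ t₃)) * (t₂ ⬝ᵥ (t₃ ⨯₃ t₄))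
      = (t₄ ⬝ᵥ (t₅ ⨯₃ t₆)) * (t₅ ⬝ᵥ (t₆ ⨯₃ t₁)) := by
    linear_combination hJ6 - hT234 + hT561
  -- nonvanishing of two of the t-determinants
  have hD1 : t₁ ⬝ᵥ (t₂ ⨯₃ t₃) ≠ 0 := left_ne_zero_of_mul (hP2 ▸ hg2)
  have hD6 : t₆ ⬝ᵥ (t₁ ⨯₃ t₂) ≠ 0 := right_ne_zero_of_mul (hP6 ▸ hg6)
  -- the three conclusions
  have heq1 : Δ''₁ * Δ'₃ = Δ''₂ * Δ'₂ := by
    apply mul_left_cancel₀ hD6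
    rw [hQ1, hQ2, hP2, hP3]
    linear_combination ((t₂ ⬝ᵥ (t₃ ⨯₃ t₄)) * (t₆ ⬝ᵥ (t₁ ⨯₃ t₂))) * hK1
      - ((t₂ ⬝ᵥ (t₃ ⨯₃ t₄)) * (t₃ ⬝ᵥ (t₄ ⨯₃ t₅))) * hK2
      - ((t₂ ⬝ᵥ (t₃ ⨯₃ t₄)) * (t₃ ⬝ᵥ (t₄ ⨯₃ t₅) + t₂ ⬝ᵥ (t₃ ⨯₃ t₅))) * hK3
  have heq2 : Δ''₂ * Δ'₁ = Δ''₃ * Δ'₃ := by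
    apply mul_left_cancel₀ hD1
    rw [hQ2, hQ3, hP1, hP3]
    linear_combination ((t₁ ⬝ᵥ (t₂ ⨯₃ t₃)) * (t₃ ⬝ᵥ (t₄ ⨯₃ t₅) - t₂ ⬝ᵥ (t₄ ⨯₃ t₅)
        + t₂ ⬝ᵥ (t₃ ⨯₃ t₅) - t₂ ⬝ᵥ (t₃ ⨯₃ t₄))) * hK3
      + ((t₃ ⬝ᵥ (t₄ ⨯₃ t₅)) * (t₁ ⬝ᵥ (t₂ ⨯₃ t₃))) * hK4
      - ((t₃ ⬝ᵥ (t₄ ⨯₃ t₅)) * (t₄ ⬝ᵥ (t₅ ⨯₃ t₆))) * hK5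
      - ((t₃ ⬝ᵥ (t₄ ⨯₃ t₅)) * (t₄ ⬝ᵥ (t₅ ⨯₃ t₆) + t₃ ⬝ᵥ (t₄ ⨯₃ t₆))) * hK6
  have heq3 : Δ''₃ * Δ'₂ = Δ''₁ * Δ'₁ := by
    apply mul_right_cancel₀ hg3
    linear_combination (-Δ'₁) * heq1 + (-Δ'₂) * heq2
  exact ⟨heq1, heq2, heq3⟩
end

section
/- Let v_1,…,v_6 ∈ ℝ³ be the edge vectors of a generic regular closed hexagon with support system u_1,…,u_6, and let w_i = u_{i+1} − u_i (indices mod 6) be the edge vectors of the derived hexagon. Then ⟨w_2,[w_3,w_4]⟩ + ⟨w_3,[w_4,w_5]⟩ + ⟨w_2,[w_3,w_5]⟩ + ⟨w_2,[w_4,w_5]⟩ = 0 and 2·⟨w_1,[w_2,w_3]⟩ + ⟨w_1,[w_2,w_4]⟩ + ⟨w_3,[w_5,w_6]⟩ = 0. -/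
open Matrix

/-- Let `v₁, …, v₆` be the edge vectors of a generic regular closed
hexagon with support system `u₁, …, u₆`, and let `wᵢ = u_{i+1} - uᵢ` (indices mod 6) be
the edge vectors of the derived hexagon.  Then
`⟨w₂,[w₃,w₄]⟩ + ⟨w₃,[w₄,w₅]⟩ + ⟨w₂,[w₃,w₅]⟩ + ⟨w₂,[w₄,w₅]⟩ = 0` and
`2·⟨w₁,[w₂,w₃]⟩ + ⟨w₁,[w₂,w₄]⟩ + ⟨w₃,[w₅,w₆]⟩ = 0`. -/
theorem derived_hexagon_determinant_relations (v₁ v₂ v₃ v₄ v₅ v₆ : Fin 3 → ℝ)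
    (hclosed : v₁ + v₂ + v₃ + v₄ + v₅ + v₆ = 0)
    (hΔ₁ : v₁ ⬝ᵥ (v₂ ⨯₃ v₃) ≠ 0)
    (hΔ₂ : v₂ ⬝ᵥ (v₃ ⨯₃ v₄) ≠ 0)
    (hΔ₃ : v₃ ⬝ᵥ (v₄ ⨯₃ v₅) ≠ 0)
    (hΔ₄ : v₄ ⬝ᵥ (v₅ ⨯₃ v₆) ≠ 0)
    (hΔ₅ : v₅ ⬝ᵥ (v₆ ⨯₃ v₁) ≠ 0)
    (hΔ₆ : v₆ ⬝ᵥ (v₁ ⨯₃ v₂) ≠ 0)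
    (u₁ u₂ u₃ u₄ u₅ u₆ : Fin 3 → ℝ)
    (h₁₂ : u₁ ⨯₃ u₂ = v₂) (h₂₃ : u₂ ⨯₃ u₃ = v₃) (h₃₄ : u₃ ⨯₃ u₄ = v₄)
    (h₄₅ : u₄ ⨯₃ u₅ = v₅) (h₅₆ : u₅ ⨯₃ u₆ = v₆) (h₆₁ : u₆ ⨯₃ u₁ = v₁)
    (w₁ w₂ w₃ w₄ w₅ w₆ : Fin 3 → ℝ)
    (hw₁ : w₁ = u₂ - u₁) (hw₂ : w₂ = u₃ - u₂) (hw₃ : w₃ = u₄ - u₃)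
    (hw₄ : w₄ = u₅ - u₄) (hw₅ : w₅ = u₆ - u₅) (hw₆ : w₆ = u₁ - u₆) :
    w₂ ⬝ᵥ (w₃ ⨯₃ w₄) + w₃ ⬝ᵥ (w₄ ⨯₃ w₅) + w₂ ⬝ᵥ (w₃ ⨯₃ w₅) + w₂ ⬝ᵥ (w₄ ⨯₃ w₅) = 0 ∧
      2 * (w₁ ⬝ᵥ (w₂ ⨯₃ w₃)) + w₁ ⬝ᵥ (w₂ ⨯₃ w₄) + w₃ ⬝ᵥ (w₅ ⨯₃ w₆) = 0 := by
  subst hw₁ hw₂ hw₃ hw₄ hw₅ hw₆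
  rw [← h₁₂, ← h₂₃, ← h₃₄, ← h₄₅, ← h₅₆, ← h₆₁] at hclosed
  have e : ∀ j : Fin 3,
      (u₆ ⨯₃ u₁) j + (u₁ ⨯₃ u₂) j + (u₂ ⨯₃ u₃) j + (u₃ ⨯₃ u₄) j
        + (u₄ ⨯₃ u₅) j + (u₅ ⨯₃ u₆) j = 0 := by
    intro j
    have := congrFun hclosed j
    simpa using this
  have e0 := e 0; have e1 := e 1; have e2 := e 2
  simp only [crossProduct, LinearMap.mk₂_apply, cons_val_zero, cons_val_one, head_cons,
    cons_val_two, tail_cons, dotProduct, Fin.sum_univ_three, Pi.sub_apply] at e0 e1 e2 ⊢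
  constructor
  · linear_combination (-(u₂ 0)) * e0 + (-(u₂ 1)) * e1 + (-(u₂ 2)) * e2
      + u₆ 0 * e0 + u₆ 1 * e1 + u₆ 2 * e2
  · linear_combination (-(u₁ 0) - u₃ 0 + u₄ 0 + u₅ 0) * e0
      + (-(u₁ 1) - u₃ 1 + u₄ 1 + u₅ 1) * e1
      + (-(u₁ 2) - u₃ 2 + u₄ 2 + u₅ 2) * e2
end

section
/- Let v_1,…,v_6 ∈ ℝ³ be the edge vectors of a generic regular closed hexagon and let u_1,…,u_6 be a support system. Then ⟨u_4 − u_2, [u_3 − u_1, u_5 − u_1]⟩ = 0 and ⟨u_6 − u_2, [u_3 − u_1, u_5 − u_1]⟩ = 0; that is, the vertices u_1, u_3, u_5 of the derived hexagon lie in a plane Π_1 and the vertices u_2, u_4, u_6 lie in a plane Π_2 parallel to Π_1. -/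
open Matrix

/-- Let `v₁, …, v₆` be the edge vectors of a generic regular closed
hexagon with support system `u₁, …, u₆`.  Then
`⟨u₄ - u₂, [u₃ - u₁, u₅ - u₁]⟩ = 0` and `⟨u₆ - u₂, [u₃ - u₁, u₅ - u₁]⟩ = 0`: the vertices
`u₁, u₃, u₅` of the derived hexagon lie in a plane `Π₁` and the vertices `u₂, u₄, u₆` lie
in a plane `Π₂` parallel to `Π₁`. -/
theorem derived_hexagon_two_parallel_planes (v₁ v₂ v₃ v₄ v₅ v₆ : Fin 3 → ℝ)
    (hclosed : v₁ + v₂ + v₃ + v₄ + v₅ + v₆ = 0)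
    (hΔ₁ : v₁ ⬝ᵥ (v₂ ⨯₃ v₃) ≠ 0)
    (hΔ₂ : v₂ ⬝ᵥ (v₃ ⨯₃ v₄) ≠ 0)
    (hΔ₃ : v₃ ⬝ᵥ (v₄ ⨯₃ v₅) ≠ 0)
    (hΔ₄ : v₄ ⬝ᵥ (v₅ ⨯₃ v₆) ≠ 0)
    (hΔ₅ : v₅ ⬝ᵥ (v₆ ⨯₃ v₁) ≠ 0)
    (hΔ₆ : v₆ ⬝ᵥ (v₁ ⨯₃ v₂) ≠ 0)
    (u₁ u₂ u₃ u₄ u₅ u₆ : Fin 3 → ℝ)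
    (h₁₂ : u₁ ⨯₃ u₂ = v₂) (h₂₃ : u₂ ⨯₃ u₃ = v₃) (h₃₄ : u₃ ⨯₃ u₄ = v₄)
    (h₄₅ : u₄ ⨯₃ u₅ = v₅) (h₅₆ : u₅ ⨯₃ u₆ = v₆) (h₆₁ : u₆ ⨯₃ u₁ = v₁) :
    (u₄ - u₂) ⬝ᵥ ((u₃ - u₁) ⨯₃ (u₅ - u₁)) = 0 ∧
      (u₆ - u₂) ⬝ᵥ ((u₃ - u₁) ⨯₃ (u₅ - u₁)) = 0 := by
  have hC : (u₆ ⨯₃ u₁) + (u₁ ⨯₃ u₂) + (u₂ ⨯₃ u₃) + (u₃ ⨯₃ u₄) + (u₄ ⨯₃ u₅) +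
      (u₅ ⨯₃ u₆) = 0 := by
    rw [h₆₁, h₁₂, h₂₃, h₃₄, h₄₅, h₅₆]; exact hclosed
  have hC0 := congrFun hC 0
  have hC1 := congrFun hC 1
  have hC2 := congrFun hC 2
  simp only [crossProduct, LinearMap.mk₂_apply, Pi.add_apply, Pi.zero_apply,
    Matrix.cons_val_zero, Matrix.cons_val_one, Matrix.head_cons,
    Matrix.cons_val_two, Matrix.tail_cons] at hC0 hC1 hC2
  constructor
  · simp only [crossProduct, LinearMap.mk₂_apply, dotProduct, Fin.sum_univ_three,
      Pi.sub_apply, Matrix.cons_val_zero, Matrix.cons_val_one, Matrix.head_cons,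
      Matrix.cons_val_two, Matrix.tail_cons]
    linear_combination (u₁ 0 - u₅ 0) * hC0 + (u₁ 1 - u₅ 1) * hC1 +
      (u₁ 2 - u₅ 2) * hC2
  · simp only [crossProduct, LinearMap.mk₂_apply, dotProduct, Fin.sum_univ_three,
      Pi.sub_apply, Matrix.cons_val_zero, Matrix.cons_val_one, Matrix.head_cons,
      Matrix.cons_val_two, Matrix.tail_cons]
    linear_combination (u₃ 0 - u₅ 0) * hC0 + (u₃ 1 - u₅ 1) * hC1 +
      (u₃ 2 - u₅ 2) * hC2
end
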